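/- arXiv:1307.6018 — 6 statements merged into one kernel-verified Lean document; each statement's English description precedes it below -/
import Mathlib

section
/- Rearrangement preserves differential (Shannon) entropy: for a probability density f on R^n, if one of h(f) = −∫ f log f dx and h(f*) is well defined, then so is the other and h(f) = h(f*). -/
open MeasureTheory Set Filter ENNReal

noncomputable section

/-- The spherically symmetric (decreasing) rearrangement of a set `A ⊆ ℝⁿ`:
the centered open ball with the same Lebesgue measure as `A`
(empty if `A` is null, all of `ℝⁿ` if `A` has infinite measure). -/
def ballRearrange (n : ℕ) (A : Set (EuclideanSpace ℝ (Fin n))) :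
    Set (EuclideanSpace ℝ (Fin n)) :=
  {x | volume (Metric.ball (0 : EuclideanSpace ℝ (Fin n)) ‖x‖) < volume A}

/-- The spherically symmetric decreasing rearrangement of a function:
`f*(y) = ∫₀^∞ 1{y ∈ {x : f x > t}*} dt`. -/
def symmRearr (n : ℕ) (f : EuclideanSpace ℝ (Fin n) → ℝ≥0∞) :
    EuclideanSpace ℝ (Fin n) → ℝ≥0∞ :=
  fun y => ∫⁻ t in Ioi (0 : ℝ), (ballRearrange n {x | ENNReal.ofReal t < f x}).indicator 1 y

/-- `f` is a probability density on `ℝⁿ`. -/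
def IsDensity (n : ℕ) (f : EuclideanSpace ℝ (Fin n) → ℝ≥0∞) : Prop :=
  Measurable f ∧ ∫⁻ x, f x = 1

/-- Integral of the positive part of `-f log f`. -/
def entPos (n : ℕ) (f : EuclideanSpace ℝ (Fin n) → ℝ≥0∞) : ℝ≥0∞ :=
  ∫⁻ x, ENNReal.ofReal (-((f x).toReal * Real.log (f x).toReal))

/-- Integral of the negative part of `-f log f`. -/
def entNeg (n : ℕ) (f : EuclideanSpace ℝ (Fin n) → ℝ≥0∞) : ℝ≥0∞ :=
  ∫⁻ x, ENNReal.ofReal ((f x).toReal * Real.log (f x).toReal)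

/-- The Shannon differential entropy `h(f) = -∫ f log f` is well defined. -/
def EntDefined (n : ℕ) (f : EuclideanSpace ℝ (Fin n) → ℝ≥0∞) : Prop :=
  entPos n f ≠ ⊤ ∨ entNeg n f ≠ ⊤

/-- The Shannon differential entropy as an extended real number. -/
def entropy (n : ℕ) (f : EuclideanSpace ℝ (Fin n) → ℝ≥0∞) : EReal :=
  (entPos n f : EReal) - (entNeg n f : EReal)

/-- The Rényi entropy of order `p ∈ (0,1) ∪ (1,∞)`:
`h_p(f) = (1/(1-p)) log ∫ f^p`. -/
def renyi (n : ℕ) (f : EuclideanSpace ℝ (Fin n) → ℝ≥0∞) (p : ℝ) : EReal :=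
  (((1 - p)⁻¹ : ℝ) : EReal) * ENNReal.log (∫⁻ x, f x ^ p)

/-- Convolution of two `ℝ≥0∞`-valued functions on `ℝⁿ`. -/
def conv2 (n : ℕ) (f g : EuclideanSpace ℝ (Fin n) → ℝ≥0∞) :
    EuclideanSpace ℝ (Fin n) → ℝ≥0∞ :=
  fun x => ∫⁻ y, f y * g (x - y)

/-- Iterated convolution of a (nonempty) list of functions. -/
def convList (n : ℕ) : List (EuclideanSpace ℝ (Fin n) → ℝ≥0∞) →
    (EuclideanSpace ℝ (Fin n) → ℝ≥0∞)
  | [] => fun _ => 0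
  | [f] => f
  | f :: g :: rest => conv2 n f (convList n (g :: rest))

/-- `f ≺ g`: `f` is majorized by `g`. -/
def Majorizes (n : ℕ) (f g : EuclideanSpace ℝ (Fin n) → ℝ≥0∞) : Prop :=
  ∀ r : ℝ, 0 < r →
    ∫⁻ x in Metric.ball (0 : EuclideanSpace ℝ (Fin n)) r, symmRearr n f x ≤
      ∫⁻ x in Metric.ball (0 : EuclideanSpace ℝ (Fin n)) r, symmRearr n g x


namespace EntropyRearrAux

variable {n : ℕ}

/-- volume of centered balls as a function of the point, measurable. -/
lemma measurable_w :
    Measurable fun y : EuclideanSpace ℝ (Fin n) =>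
      volume (Metric.ball (0 : EuclideanSpace ℝ (Fin n)) ‖y‖) := by
  have h1 : Monotone fun r : ℝ => volume (Metric.ball (0 : EuclideanSpace ℝ (Fin n)) r) :=
    fun a b hab => measure_mono (Metric.ball_subset_ball hab)
  exact h1.measurable.comp measurable_norm

lemma m_antitone (f : EuclideanSpace ℝ (Fin n) → ℝ≥0∞) :
    Antitone fun t : ℝ => volume {x : EuclideanSpace ℝ (Fin n) | ENNReal.ofReal t < f x} := by
  intro a b hab
  exact measure_mono fun x hx => lt_of_le_of_lt (ENNReal.ofReal_le_ofReal hab) hx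

lemma markov {f : EuclideanSpace ℝ (Fin n) → ℝ≥0∞} (hf : IsDensity n f) {t : ℝ} (ht : 0 < t) :
    volume {x : EuclideanSpace ℝ (Fin n) | ENNReal.ofReal t < f x} ≠ ⊤ := by
  intro hcon
  have h1 : ENNReal.ofReal t * volume {x : EuclideanSpace ℝ (Fin n) | ENNReal.ofReal t ≤ f x}
      ≤ ∫⁻ x, f x := mul_meas_ge_le_lintegral₀ hf.1.aemeasurable _
  rw [hf.2] at h1
  have h2 : volume {x : EuclideanSpace ℝ (Fin n) | ENNReal.ofReal t ≤ f x} = ⊤ := by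
    apply top_le_iff.mp
    rw [← hcon]
    exact measure_mono (setOf_subset_setOf.2 fun x hx => le_of_lt hx)
  rw [h2, ENNReal.mul_top (ENNReal.ofReal_pos.2 ht).ne'] at h1
  exact absurd h1 (by simp)

lemma volume_ballRearrange (A : Set (EuclideanSpace ℝ (Fin n))) (hA : volume A ≠ ⊤) :
    volume (ballRearrange n A) = volume A := by
  rcases eq_or_ne (volume A) 0 with h0 | h0
  · have he : ballRearrange n A = ∅ := by
      ext x; simp [ballRearrange, h0]
    rw [he, measure_empty, h0]
  rcases Nat.eq_zero_or_pos n with hn | hn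
  · subst hn
    have hx0 : ∀ x : EuclideanSpace ℝ (Fin 0), x = 0 := fun x => Subsingleton.elim _ _
    have hw : ballRearrange 0 A = univ := by
      ext x
      simp only [ballRearrange, mem_setOf_eq, mem_univ, iff_true]
      rw [hx0 x, norm_zero, Metric.ball_zero, measure_empty]
      exact pos_iff_ne_zero.2 h0
    have hAuniv : A = univ := by
      rcases nonempty_of_measure_ne_zero h0 with ⟨a, ha⟩
      ext x; simp only [mem_univ, iff_true]
      exact (Subsingleton.elim x a) ▸ ha
    rw [hw, hAuniv]
  · haveI : Nontrivial (EuclideanSpace ℝ (Fin n)) := by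
      apply Module.nontrivial_of_finrank_pos (R := ℝ)
      rw [finrank_euclideanSpace_fin]
      exact hn
    set k := volume (Metric.ball (0 : EuclideanSpace ℝ (Fin n)) 1) with hk
    have hk0 : k ≠ 0 := (Metric.measure_ball_pos volume (0 : EuclideanSpace ℝ (Fin n)) one_pos).ne'
    have hktop : k ≠ ⊤ := measure_ball_lt_top.ne
    have hVk : volume A / k ≠ ⊤ := (ENNReal.div_lt_top hA hk0).ne
    set R : ℝ := ((volume A / k).toReal) ^ ((1 : ℝ) / (n : ℝ)) with hR
    have hR0 : 0 ≤ R := Real.rpow_nonneg ENNReal.toReal_nonneg _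
    have hRn : ENNReal.ofReal (R ^ n) = volume A / k := by
      rw [hR, ← Real.rpow_natCast (_ ^ _) n, ← Real.rpow_mul ENNReal.toReal_nonneg,
        one_div, inv_mul_cancel₀ (by exact_mod_cast hn.ne'), Real.rpow_one,
        ENNReal.ofReal_toReal hVk]
    have hVA : volume A = ENNReal.ofReal (R ^ n) * k := by
      rw [hRn, ENNReal.div_mul_cancel hk0 hktop]
    have hball : ∀ r : ℝ, 0 ≤ r →
        (volume (Metric.ball (0 : EuclideanSpace ℝ (Fin n)) r) < volume A ↔ r < R) := by
      intro r hr
      rw [Measure.addHaar_ball volume _ hr, finrank_euclideanSpace_fin, hVA, ← hk,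
        ENNReal.mul_lt_mul_iff_left hk0 hktop,
        ENNReal.ofReal_lt_ofReal_iff_of_nonneg (by positivity)]
      exact pow_lt_pow_iff_left₀ hr hR0 hn.ne'
    have hBR : ballRearrange n A = Metric.ball 0 R := by
      ext y
      simp only [ballRearrange, mem_setOf_eq, Metric.mem_ball, dist_zero_right]
      exact hball ‖y‖ (norm_nonneg y)
    rw [hBR, Measure.addHaar_ball volume _ hR0, finrank_euclideanSpace_fin, ← hk, hVA]

lemma symmRearr_eq (f : EuclideanSpace ℝ (Fin n) → ℝ≥0∞) (y : EuclideanSpace ℝ (Fin n)) :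
    symmRearr n f y =
      volume ({t : ℝ | volume (Metric.ball (0 : EuclideanSpace ℝ (Fin n)) ‖y‖) <
        volume {x | ENNReal.ofReal t < f x}} ∩ Ioi 0) := by
  set w := volume (Metric.ball (0 : EuclideanSpace ℝ (Fin n)) ‖y‖) with hw
  set T : Set ℝ := {t : ℝ | w < volume {x | ENNReal.ofReal t < f x}} with hT
  have hTm : MeasurableSet T := by
    have : T = (fun t : ℝ => volume {x : EuclideanSpace ℝ (Fin n) | ENNReal.ofReal t < f x})
        ⁻¹' Ioi w := rfl
    rw [this]
    exact (m_antitone f).measurable measurableSet_Ioi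
  have hfun : (fun t : ℝ => (ballRearrange n {x | ENNReal.ofReal t < f x}).indicator 1 y)
      = T.indicator fun _ => (1 : ℝ≥0∞) := by
    funext t
    by_cases ht : t ∈ T
    · rw [Set.indicator_of_mem (show y ∈ ballRearrange n {x | ENNReal.ofReal t < f x} from ht),
        Set.indicator_of_mem ht, Pi.one_apply]
    · rw [Set.indicator_of_notMem
        (show y ∉ ballRearrange n {x | ENNReal.ofReal t < f x} from ht),
        Set.indicator_of_notMem ht]
  rw [symmRearr, hfun, lintegral_indicator hTm, setLIntegral_one, Measure.restrict_apply hTm]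

lemma superlevel_symmRearr (f : EuclideanSpace ℝ (Fin n) → ℝ≥0∞) {t : ℝ} (ht : 0 ≤ t) :
    {y | ENNReal.ofReal t < symmRearr n f y} =
      ⋃ k : ℕ, ballRearrange n {x | ENNReal.ofReal (t + 1 / (k + 1)) < f x} := by
  ext y
  set w := volume (Metric.ball (0 : EuclideanSpace ℝ (Fin n)) ‖y‖) with hw
  set m : ℝ → ℝ≥0∞ := fun t => volume {x : EuclideanSpace ℝ (Fin n) | ENNReal.ofReal t < f x}
    with hm
  have hmem : ∀ s : ℝ, (y ∈ ballRearrange n {x | ENNReal.ofReal s < f x}) ↔ w < m s := by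
    intro s; rfl
  simp only [mem_setOf_eq, mem_iUnion, hmem]
  rw [symmRearr_eq]
  constructor
  · intro hlt
    by_contra hcon
    push_neg at hcon
    have hsub : {s : ℝ | w < m s} ∩ Ioi 0 ⊆ Ioc 0 t := by
      rintro s ⟨hs1, hs2⟩
      refine ⟨hs2, ?_⟩
      by_contra hst
      push_neg at hst
      obtain ⟨k, hk⟩ := exists_nat_one_div_lt (sub_pos.2 hst)
      have h1 : t + 1 / (k + 1 : ℝ) < s := by linarith
      exact absurd (lt_of_lt_of_le hs1 (m_antitone f h1.le)) (not_lt.2 (hcon k))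
    have := lt_of_lt_of_le hlt (measure_mono hsub)
    rw [Real.volume_Ioc, sub_zero] at this
    exact absurd this (lt_irrefl _)
  · rintro ⟨k, hk⟩
    have hpos : (0 : ℝ) < 1 / (k + 1 : ℝ) := by positivity
    have hsub : Ioc 0 (t + 1 / (k + 1 : ℝ)) ⊆ {s : ℝ | w < m s} ∩ Ioi 0 := by
      rintro s ⟨hs1, hs2⟩
      exact ⟨lt_of_lt_of_le hk (m_antitone f hs2), hs1⟩
    calc ENNReal.ofReal t < ENNReal.ofReal (t + 1 / (k + 1 : ℝ)) := by
          rw [ENNReal.ofReal_lt_ofReal_iff (by linarith)]; linarith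
      _ = volume (Ioc (0 : ℝ) (t + 1 / (k + 1 : ℝ))) := by
          rw [Real.volume_Ioc, sub_zero]
      _ ≤ _ := measure_mono hsub

lemma exists_ofReal_one_div_lt {c : ℝ≥0∞} {t : ℝ} (ht : 0 ≤ t)
    (hc : ENNReal.ofReal t < c) : ∃ k : ℕ, ENNReal.ofReal (t + 1 / (k + 1)) < c := by
  have htend : Tendsto (fun k : ℕ => ENNReal.ofReal (t + 1 / (k + 1 : ℝ))) atTop
      (nhds (ENNReal.ofReal t)) := by
    apply (ENNReal.continuous_ofReal.tendsto t).comp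
    simpa using tendsto_const_nhds.add (tendsto_one_div_add_atTop_nhds_zero_nat (𝕜 := ℝ))
  exact (htend.eventually_lt_const hc).exists

lemma ballRearrange_mono_meas {A B : Set (EuclideanSpace ℝ (Fin n))}
    (h : volume A ≤ volume B) : ballRearrange n A ⊆ ballRearrange n B :=
  fun _ hy => lt_of_lt_of_le hy h

lemma meas_superlevel {f : EuclideanSpace ℝ (Fin n) → ℝ≥0∞} (hf : IsDensity n f)
    {t : ℝ} (ht : 0 ≤ t) :
    volume {y | ENNReal.ofReal t < symmRearr n f y} =
      volume {x | ENNReal.ofReal t < f x} := by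
  rw [superlevel_symmRearr f ht]
  have hmono : Monotone fun k : ℕ =>
      ballRearrange n {x : EuclideanSpace ℝ (Fin n) | ENNReal.ofReal (t + 1 / (k + 1)) < f x} := by
    intro a b hab
    apply ballRearrange_mono_meas
    apply m_antitone f
    have : (1 : ℝ) / (b + 1) ≤ 1 / (a + 1) := by
      apply one_div_le_one_div_of_le (by positivity)
      exact_mod_cast add_le_add_left (Nat.cast_le.2 hab) 1
    linarith
  rw [hmono.directed_le.measure_iUnion]
  have hvol : ∀ k : ℕ,
      volume (ballRearrange n
        {x : EuclideanSpace ℝ (Fin n) | ENNReal.ofReal (t + 1 / (k + 1)) < f x}) =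
      volume {x : EuclideanSpace ℝ (Fin n) | ENNReal.ofReal (t + 1 / (k + 1)) < f x} := by
    intro k
    exact volume_ballRearrange _ (markov hf (by positivity))
  simp_rw [hvol]
  have hmono2 : Monotone fun k : ℕ =>
      {x : EuclideanSpace ℝ (Fin n) | ENNReal.ofReal (t + 1 / (k + 1)) < f x} := by
    intro a b hab x hx
    refine lt_of_le_of_lt (ENNReal.ofReal_le_ofReal ?_) hx
    have : (1 : ℝ) / (b + 1) ≤ 1 / (a + 1) := by
      apply one_div_le_one_div_of_le (by positivity)
      exact_mod_cast add_le_add_left (Nat.cast_le.2 hab) 1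
    linarith
  rw [← hmono2.directed_le.measure_iUnion]
  congr 1
  ext x
  simp only [mem_iUnion, mem_setOf_eq]
  constructor
  · rintro ⟨k, hk⟩
    have hpos : (0 : ℝ) < 1 / (k + 1 : ℝ) := by positivity
    exact lt_of_le_of_lt (ENNReal.ofReal_le_ofReal (by linarith)) hk
  · intro hx
    exact exists_ofReal_one_div_lt ht hx

lemma measurable_symmRearr (f : EuclideanSpace ℝ (Fin n) → ℝ≥0∞) :
    Measurable (symmRearr n f) := by
  apply measurable_of_Ioi
  intro c
  rcases eq_or_ne c ⊤ with rfl | hc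
  · have : symmRearr n f ⁻¹' Ioi ⊤ = ∅ := by
      ext y; simp
    rw [this]; exact MeasurableSet.empty
  · have hceq : c = ENNReal.ofReal c.toReal := (ENNReal.ofReal_toReal hc).symm
    have : symmRearr n f ⁻¹' Ioi c = {y | ENNReal.ofReal c.toReal < symmRearr n f y} := by
      ext y; simp [← hceq, Ioi]
    rw [this, superlevel_symmRearr f ENNReal.toReal_nonneg]
    apply MeasurableSet.iUnion
    intro k
    have heq : ballRearrange n
        {x : EuclideanSpace ℝ (Fin n) | ENNReal.ofReal (c.toReal + 1 / (k + 1)) < f x} =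
        (fun y : EuclideanSpace ℝ (Fin n) => volume (Metric.ball (0 : EuclideanSpace ℝ (Fin n)) ‖y‖))
          ⁻¹' Iio (volume {x : EuclideanSpace ℝ (Fin n) |
            ENNReal.ofReal (c.toReal + 1 / (k + 1)) < f x}) := rfl
    rw [heq]
    exact measurable_w measurableSet_Iio

lemma meas_superlevel' {f : EuclideanSpace ℝ (Fin n) → ℝ≥0∞} (hf : IsDensity n f)
    (c : ℝ≥0∞) :
    volume {y | c < symmRearr n f y} = volume {x | c < f x} := by
  rcases eq_or_ne c ⊤ with rfl | hc
  · simp [not_top_lt]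
  · have hceq : c = ENNReal.ofReal c.toReal := (ENNReal.ofReal_toReal hc).symm
    rw [hceq]
    exact meas_superlevel hf ENNReal.toReal_nonneg

lemma vol_preimage {f : EuclideanSpace ℝ (Fin n) → ℝ≥0∞} (hf : IsDensity n f)
    {B : Set ℝ≥0∞} (hB : MeasurableSet B) (h0 : (0 : ℝ≥0∞) ∉ B) :
    volume (f ⁻¹' B) = volume (symmRearr n f ⁻¹' B) := by
  set g := symmRearr n f with hg
  have hfm : Measurable f := hf.1
  have hgm : Measurable g := measurable_symmRearr f
  have hAeq : ∀ c : ℝ≥0∞, volume {x | c < f x} = volume {x | c < g x} :=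
    fun c => (meas_superlevel' hf c).symm
  -- the truncated pushforward measures agree
  have key : ∀ k : ℕ,
      Measure.map f (volume.restrict {x | ENNReal.ofReal (1 / (k + 1)) < f x}) =
      Measure.map g (volume.restrict {x | ENNReal.ofReal (1 / (k + 1)) < g x}) := by
    intro k
    set ε : ℝ≥0∞ := ENNReal.ofReal (1 / (k + 1)) with hε
    have hεlt : ∀ {h : EuclideanSpace ℝ (Fin n) → ℝ≥0∞}, Measurable h →
        MeasurableSet {x | ε < h x} := fun hm => hm measurableSet_Ioi
    have hfin : volume {x | ε < f x} ≠ ⊤ := markov hf (by positivity)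
    have happ : ∀ (h : EuclideanSpace ℝ (Fin n) → ℝ≥0∞) (hm : Measurable h)
        (c : ℝ≥0∞),
        Measure.map h (volume.restrict {x | ε < h x}) (Ioi c) =
          volume {x | max c ε < h x} := by
      intro h hm c
      rw [Measure.map_apply hm measurableSet_Ioi, Measure.restrict_apply (hm measurableSet_Ioi)]
      congr 1
      ext x
      simp only [mem_inter_iff, mem_preimage, mem_Ioi, mem_setOf_eq, max_lt_iff]
    haveI hfinF : IsFiniteMeasure (Measure.map f (volume.restrict {x | ε < f x})) := by
      constructor
      rw [Measure.map_apply hfm MeasurableSet.univ, preimage_univ,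
        Measure.restrict_apply MeasurableSet.univ, univ_inter]
      exact lt_top_iff_ne_top.2 hfin
    apply ext_of_generate_finite (range Ioi)
      (BorelSpace.measurable_eq.trans (borel_eq_generateFrom_Ioi ℝ≥0∞)) isPiSystem_Ioi
    · rintro s ⟨c, rfl⟩
      rw [happ f hfm c, happ g hgm c, hAeq (max c ε)]
    · rw [Measure.map_apply hfm MeasurableSet.univ, preimage_univ,
        Measure.restrict_apply MeasurableSet.univ, univ_inter,
        Measure.map_apply hgm MeasurableSet.univ, preimage_univ,
        Measure.restrict_apply MeasurableSet.univ, univ_inter]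
      exact hAeq ε
  -- now exhaust B by the truncations
  have hsplit : ∀ (h : EuclideanSpace ℝ (Fin n) → ℝ≥0∞), Measurable h →
      volume (h ⁻¹' B) =
        ⨆ k : ℕ, Measure.map h (volume.restrict {x | ENNReal.ofReal (1 / (k + 1)) < h x}) B := by
    intro h hm
    have hker : ∀ k : ℕ,
        Measure.map h (volume.restrict {x | ENNReal.ofReal (1 / (k + 1)) < h x}) B =
          volume (h ⁻¹' B ∩ {x | ENNReal.ofReal (1 / (k + 1)) < h x}) := by
      intro k
      rw [Measure.map_apply hm hB, Measure.restrict_apply (hm hB)]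
    simp_rw [hker]
    have hmono : Monotone fun k : ℕ =>
        h ⁻¹' B ∩ {x : EuclideanSpace ℝ (Fin n) | ENNReal.ofReal (1 / (k + 1)) < h x} := by
      intro a b hab x hx
      refine ⟨hx.1, lt_of_le_of_lt (ENNReal.ofReal_le_ofReal ?_) hx.2⟩
      apply one_div_le_one_div_of_le (by positivity)
      exact_mod_cast add_le_add_left (Nat.cast_le.2 hab) 1
    rw [← hmono.directed_le.measure_iUnion]
    congr 1
    ext x
    simp only [mem_iUnion, mem_inter_iff, mem_preimage, mem_setOf_eq]
    constructor
    · intro hx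
      have h0x : (0 : ℝ≥0∞) < h x := pos_iff_ne_zero.2 fun hz => h0 (hz ▸ hx)
      obtain ⟨k, hk⟩ := exists_ofReal_one_div_lt (le_refl (0 : ℝ)) (by simpa using h0x)
      exact ⟨k, hx, by simpa using hk⟩
    · rintro ⟨k, hk, _⟩; exact hk
  rw [hsplit f hfm, hsplit g hgm]
  exact iSup_congr fun k => by rw [key k]

lemma lintegral_comp_eq {f : EuclideanSpace ℝ (Fin n) → ℝ≥0∞} (hf : IsDensity n f)
    (φ : ℝ≥0∞ → ℝ) (hφ : Measurable φ) (hφ0 : φ 0 ≤ 0) :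
    ∫⁻ x, ENNReal.ofReal (φ (f x)) = ∫⁻ x, ENNReal.ofReal (φ (symmRearr n f x)) := by
  set g := symmRearr n f with hg
  set ψ : ℝ≥0∞ → ℝ := fun u => max (φ u) 0 with hψ
  have hψm : Measurable ψ := hφ.max measurable_const
  have hofReal : ∀ u : ℝ≥0∞, ENNReal.ofReal (φ u) = ENNReal.ofReal (ψ u) := by
    intro u
    rcases le_total (φ u) 0 with h | h
    · rw [ENNReal.ofReal_of_nonpos h, hψ]
      simp [max_eq_right h]
    · rw [hψ]; simp [max_eq_left h]
  have hlayer : ∀ (h : EuclideanSpace ℝ (Fin n) → ℝ≥0∞), Measurable h →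
      ∫⁻ x, ENNReal.ofReal (ψ (h x)) =
        ∫⁻ t in Ioi (0 : ℝ), volume (h ⁻¹' {u | t < ψ u}) := by
    intro h hm
    exact lintegral_eq_lintegral_meas_lt (f := fun x => ψ (h x)) volume
      (Filter.Eventually.of_forall fun x => le_max_right _ _)
      (hψm.comp hm).aemeasurable
  simp_rw [hofReal]
  rw [hlayer f hf.1, hlayer g (measurable_symmRearr f)]
  apply setLIntegral_congr_fun measurableSet_Ioi
  intro t ht
  have hB : MeasurableSet {u : ℝ≥0∞ | t < ψ u} := hψm measurableSet_Ioi
  have h0B : (0 : ℝ≥0∞) ∉ {u : ℝ≥0∞ | t < ψ u} := by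
    simp only [mem_setOf_eq, not_lt, hψ]
    rw [max_eq_right hφ0]
    exact le_of_lt ht
  exact vol_preimage hf hB h0B

end EntropyRearrAux

/-- Rearrangement preserves Shannon differential entropy: if one of `h(f)`, `h(f*)`
is well defined, then so is the other and `h(f) = h(f*)`. -/
theorem entropy_symmRearr (n : ℕ) (f : EuclideanSpace ℝ (Fin n) → ℝ≥0∞)
    (hf : IsDensity n f) (h : EntDefined n f ∨ EntDefined n (symmRearr n f)) :
    EntDefined n f ∧ EntDefined n (symmRearr n f) ∧
      entropy n f = entropy n (symmRearr n f) := by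
  have hmeas1 : Measurable fun u : ℝ≥0∞ => u.toReal * Real.log u.toReal :=
    ENNReal.measurable_toReal.mul (Real.measurable_log.comp ENNReal.measurable_toReal)
  have hPos : entPos n f = entPos n (symmRearr n f) := by
    unfold entPos
    exact EntropyRearrAux.lintegral_comp_eq hf
      (fun u => -(u.toReal * Real.log u.toReal)) hmeas1.neg (by simp)
  have hNeg : entNeg n f = entNeg n (symmRearr n f) := by
    unfold entNeg
    exact EntropyRearrAux.lintegral_comp_eq hf
      (fun u => u.toReal * Real.log u.toReal) hmeas1 (by simp)
  have hdef : EntDefined n f ↔ EntDefined n (symmRearr n f) := by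
    unfold EntDefined
    rw [hPos, hNeg]
  refine ⟨?_, ?_, ?_⟩
  · rcases h with h | h
    · exact h
    · exact hdef.mpr h
  · rcases h with h | h
    · exact hdef.mp h
    · exact h
  · unfold entropy
    rw [hPos, hNeg]
end
end

section
/- Let f be a probability density on R^n. Then lim_{p→0+} h_p(f) = log |{x : f(x) ≠ 0}| (where |·| is Lebesgue measure and the limit may be +∞). -/
open MeasureTheory Set Filter ENNReal

noncomputable section

/-- For `c ∈ (0, ∞)`, `c ^ p → 1` as `p → 0⁺`. -/
lemma rpow_tendsto_one_aux {c : ℝ≥0∞} (hc0 : c ≠ 0) (hct : c ≠ ⊤) :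
    Tendsto (fun p : ℝ => c ^ p) (nhdsWithin 0 (Ioi 0)) (nhds 1) := by
  lift c to NNReal using hct
  have hc0' : c ≠ 0 := by simpa using hc0
  have h1 : Tendsto (fun p : ℝ => (c : NNReal) ^ p) (nhds (0:ℝ)) (nhds 1) := by
    have := Filter.Tendsto.nnrpow (f := nhds (0:ℝ)) (tendsto_const_nhds (x := c))
      tendsto_id (Or.inl hc0')
    simpa using this
  have h2 := (ENNReal.continuous_coe.tendsto 1).comp h1
  have h3 : (fun p : ℝ => ((c ^ p : NNReal) : ℝ≥0∞)) = fun p : ℝ => (c : ℝ≥0∞) ^ p := by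
    ext p; rw [ENNReal.coe_rpow_of_ne_zero hc0']
  rw [← h3]
  exact h2.mono_left nhdsWithin_le_nhds

/-- For a probability density `f` on `ℝⁿ`,
`lim_{p→0+} h_p(f) = log |{x : f x ≠ 0}|` (the limit may be `+∞`). -/
theorem renyi_tendsto_zero (n : ℕ) (f : EuclideanSpace ℝ (Fin n) → ℝ≥0∞)
    (hf : IsDensity n f) :
    Tendsto (fun p : ℝ => renyi n f p) (nhdsWithin 0 (Ioi 0))
      (nhds (ENNReal.log (volume {x | f x ≠ 0}))) := by
  obtain ⟨hm, hint⟩ := hf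
  set S : Set (EuclideanSpace ℝ (Fin n)) := {x | f x ≠ 0} with hSdef
  have hSmeas : MeasurableSet S := (hm (measurableSet_singleton 0)).compl
  -- Step 1: the integral `∫ f^p` tends to `volume S` as `p → 0⁺`.
  have hI : Tendsto (fun p : ℝ => ∫⁻ x, f x ^ p) (nhdsWithin (0:ℝ) (Ioi 0))
      (nhds (volume S)) := by
    by_cases hfin : volume S = ⊤
    · -- infinite case
      rw [hfin, ENNReal.tendsto_nhds_top_iff_nnreal]
      intro r
      set L : Set (EuclideanSpace ℝ (Fin n)) := {x | f x ≤ 1} ∩ S with hLdef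
      have hLmeas : MeasurableSet L :=
        (measurableSet_le hm measurable_const).inter hSmeas
      have hLtop : volume L = ⊤ := by
        by_contra hne
        have h1 : volume {x | 1 ≤ f x} ≤ 1 := by
          have := mul_meas_ge_le_lintegral (μ := volume) hm 1
          simpa [hint] using this
        have hsub : S ⊆ L ∪ {x | 1 ≤ f x} := by
          intro x hx
          by_cases hx1 : f x ≤ 1
          · exact Or.inl ⟨hx1, hx⟩
          · exact Or.inr (le_of_lt (lt_of_not_ge hx1))
        have htop : (⊤ : ℝ≥0∞) ≤ volume L + volume {x | 1 ≤ f x} := by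
          calc (⊤ : ℝ≥0∞) = volume S := hfin.symm
          _ ≤ volume (L ∪ {x | 1 ≤ f x}) := measure_mono hsub
          _ ≤ volume L + volume {x | 1 ≤ f x} := measure_union_le _ _
        have : volume L + volume {x | 1 ≤ f x} ≠ ⊤ :=
          ENNReal.add_ne_top.2 ⟨hne, ne_top_of_le_ne_top ENNReal.one_ne_top h1⟩
        exact this (top_le_iff.1 htop)
      -- monotone family of minorants
      set g : ℕ → EuclideanSpace ℝ (Fin n) → ℝ≥0∞ :=
        fun k => L.indicator (fun x => f x ^ (((k:ℝ)+1)⁻¹)) with hgdef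
      have hgmeas : ∀ k, Measurable (g k) :=
        fun k => (ENNReal.continuous_rpow_const.measurable.comp hm).indicator hLmeas
      have hgmono : Monotone g := by
        intro k m hkm x
        by_cases hx : x ∈ L
        · simp only [hgdef, indicator_of_mem hx]
          apply ENNReal.rpow_le_rpow_of_exponent_ge hx.1
          apply inv_anti₀ (by positivity)
          exact_mod_cast add_le_add_left (Nat.cast_le.2 hkm) 1
        · simp [hgdef, indicator_of_notMem hx]
      have hgsup : (⨆ k, ∫⁻ x, g k x) = ⊤ := by
        rw [← lintegral_iSup hgmeas hgmono]
        have hpt : ∀ x, (⨆ k, g k x) = L.indicator 1 x := by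
          intro x
          by_cases hx : x ∈ L
          · simp only [hgdef, indicator_of_mem hx, Pi.one_apply]
            have hmono : Monotone fun k : ℕ => f x ^ (((k:ℝ)+1)⁻¹) := by
              intro k m hkm
              apply ENNReal.rpow_le_rpow_of_exponent_ge hx.1
              apply inv_anti₀ (by positivity)
              exact_mod_cast add_le_add_left (Nat.cast_le.2 hkm) 1
            apply iSup_eq_of_tendsto hmono
            have hexp : Tendsto (fun k : ℕ => ((k:ℝ)+1)⁻¹) atTop
                (nhdsWithin 0 (Ioi 0)) := by
              apply tendsto_nhdsWithin_of_tendsto_nhds_of_eventually_within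
              · simpa [one_div] using tendsto_one_div_add_atTop_nhds_zero_nat (𝕜 := ℝ)
              · exact Filter.Eventually.of_forall fun k => Set.mem_Ioi.2 (by positivity)
            have hft : f x ≠ ⊤ := ne_top_of_le_ne_top ENNReal.one_ne_top hx.1
            exact (rpow_tendsto_one_aux hx.2 hft).comp hexp
          · simp [hgdef, indicator_of_notMem hx]
        rw [lintegral_congr hpt, lintegral_indicator_one hLmeas, hLtop]
      obtain ⟨k, hk⟩ : ∃ k, (r : ℝ≥0∞) < ∫⁻ x, g k x := by
        rw [← lt_iSup_iff, hgsup]; exact ENNReal.coe_lt_top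
      have hmem : Ioc (0:ℝ) (((k:ℝ)+1)⁻¹) ∈ nhdsWithin (0:ℝ) (Ioi 0) :=
        Ioc_mem_nhdsGT_of_mem ⟨le_refl _, by positivity⟩
      filter_upwards [hmem] with p hp
      refine lt_of_lt_of_le hk ?_
      calc (∫⁻ x, g k x) ≤ ∫⁻ x, L.indicator (fun x => f x ^ p) x := by
            apply lintegral_mono
            intro x
            by_cases hx : x ∈ L
            · simp only [hgdef, indicator_of_mem hx]
              exact ENNReal.rpow_le_rpow_of_exponent_ge hx.1 hp.2
            · simp [hgdef, indicator_of_notMem hx]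
      _ ≤ ∫⁻ x, f x ^ p := lintegral_mono fun x => indicator_le_self _ _ x
    · -- finite case: dominated convergence
      have hae : ∀ᵐ x, f x < ⊤ := ae_lt_top hm (by rw [hint]; exact ENNReal.one_ne_top)
      have hdc := tendsto_lintegral_filter_of_dominated_convergence
        (μ := volume) (l := nhdsWithin (0:ℝ) (Ioi 0))
        (F := fun p x => f x ^ p) (f := S.indicator 1)
        (fun x => f x + S.indicator 1 x)
        (Filter.Eventually.of_forall fun p =>
          ENNReal.continuous_rpow_const.measurable.comp hm)
        ?_ ?_ ?_
      · rwa [lintegral_indicator_one hSmeas] at hdc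
      · -- bound
        filter_upwards [Ioc_mem_nhdsGT_of_mem
          (show (0:ℝ) ∈ Ico (0:ℝ) 1 from ⟨le_refl _, zero_lt_one⟩)] with p hp
        refine ae_of_all _ fun x => ?_
        by_cases hx0 : f x = 0
        · simp [hx0, ENNReal.zero_rpow_of_pos hp.1]
        · by_cases hx1 : f x ≤ 1
          · have : f x ^ p ≤ 1 := ENNReal.rpow_le_one hx1 hp.1.le
            refine this.trans ?_
            have : S.indicator (1 : EuclideanSpace ℝ (Fin n) → ℝ≥0∞) x = 1 :=
              Set.indicator_of_mem (show x ∈ S from hx0) 1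
            rw [← this]; exact le_add_self
          · have : f x ^ p ≤ f x ^ (1:ℝ) :=
              ENNReal.rpow_le_rpow_of_exponent_le (le_of_not_ge hx1) hp.2
            rw [ENNReal.rpow_one] at this
            exact this.trans le_self_add
      · -- finiteness of the bound
        rw [lintegral_add_left hm, hint, lintegral_indicator_one hSmeas]
        exact ENNReal.add_ne_top.2 ⟨ENNReal.one_ne_top, hfin⟩
      · -- pointwise convergence
        filter_upwards [hae] with x hx
        by_cases hx0 : f x = 0
        · have hnot : x ∉ S := by simp [hSdef, hx0]
          rw [indicator_of_notMem hnot]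
          apply Tendsto.congr' _ tendsto_const_nhds
          filter_upwards [self_mem_nhdsWithin] with p hp
          exact (ENNReal.zero_rpow_of_pos hp).symm ▸ by rw [hx0, ENNReal.zero_rpow_of_pos hp]
        · rw [indicator_of_mem (show x ∈ S from hx0), Pi.one_apply]
          exact rpow_tendsto_one_aux hx0 hx.ne
  -- Step 2: combine with continuity of `log` and of the prefactor.
  have hlog : Tendsto (fun p : ℝ => ENNReal.log (∫⁻ x, f x ^ p))
      (nhdsWithin (0:ℝ) (Ioi 0)) (nhds (ENNReal.log (volume S))) :=
    (ENNReal.continuous_log.tendsto _).comp hI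
  have hcoef : Tendsto (fun p : ℝ => (((1 - p)⁻¹ : ℝ) : EReal))
      (nhdsWithin (0:ℝ) (Ioi 0)) (nhds (1 : EReal)) := by
    have h1 : Tendsto (fun p : ℝ => (1 - p)⁻¹) (nhds 0) (nhds 1) := by
      have hc : ContinuousAt (fun p : ℝ => (1 - p)⁻¹) 0 :=
        ((continuousAt_const.sub continuousAt_id).inv₀ (by norm_num))
      simpa using hc.tendsto
    have h2 : Tendsto (fun p : ℝ => (1 - p)⁻¹) (nhdsWithin (0:ℝ) (Ioi 0)) (nhds 1) :=
      h1.mono_left nhdsWithin_le_nhds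
    have h3 := EReal.tendsto_coe.2 h2
    simpa using h3
  have hmul : ContinuousAt (fun q : EReal × EReal => q.1 * q.2)
      (1, ENNReal.log (volume S)) :=
    EReal.continuousAt_mul (Or.inl one_ne_zero) (Or.inl one_ne_zero)
      (Or.inl (by rw [show (1:EReal) = ((1:ℝ):EReal) from EReal.coe_one.symm]; exact EReal.coe_ne_bot 1))
      (Or.inl (by rw [show (1:EReal) = ((1:ℝ):EReal) from EReal.coe_one.symm]; exact EReal.coe_ne_top 1))
  have hfinal := hmul.tendsto.comp (hcoef.prodMk_nhds hlog)
  simp only [one_mul] at hfinal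
  exact hfinal
end
end

section
/- Let f be a probability density on R^n. If lim_{p→1+} h_p(f) > −∞ (the limit existing by monotonicity), then the Shannon entropy h(f) = −∫ f log f dx is well defined (possibly +∞) and equals lim_{p→1+} h_p(f). -/
open MeasureTheory Set Filter ENNReal

noncomputable section

-- If `lim_{p→1+} h_p(f) > -∞`, then the Shannon entropy `h(f)` is well defined
-- (possibly `+∞`) and equals this limit (theorem at the bottom of this file).
namespace EntAux

lemma rpow_eq {t : ℝ} (ht : 0 < t) (p : ℝ) :
    t ^ p = t * Real.exp (Real.log t * (p - 1)) := by
  rw [Real.rpow_def_of_pos ht]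
  have h : Real.log t * p = Real.log t + Real.log t * (p - 1) := by ring
  rw [h, Real.exp_add, Real.exp_log ht]

lemma rpow_eq' {t : ℝ} (ht : 0 < t) (p : ℝ) :
    t ^ (p - 1) = Real.exp (Real.log t * (p - 1)) := by
  rw [Real.rpow_def_of_pos ht]

lemma ineq1 {t p : ℝ} (ht0 : 0 < t) (hp : 1 < p) :
    t - t ^ p ≤ (p - 1) * (-(t * Real.log t)) := by
  rw [rpow_eq ht0]
  have h := Real.add_one_le_exp (Real.log t * (p - 1))
  nlinarith [ht0.le]

lemma exp_key (s : ℝ) : Real.exp s - s * Real.exp s ≤ 1 := by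
  have h1 := Real.add_one_le_exp (-s)
  have h2 : Real.exp s * Real.exp (-s) = 1 := by
    rw [← Real.exp_add]; simp
  nlinarith [Real.exp_pos s, mul_le_mul_of_nonneg_left h1 (Real.exp_pos s).le]

lemma ineq2 {t p : ℝ} (ht0 : 0 < t) (hp : 1 < p) :
    -(t * Real.log t) * t ^ (p - 1) * (p - 1) ≤ t - t ^ p := by
  rw [rpow_eq' ht0, rpow_eq ht0]
  set s : ℝ := Real.log t * (p - 1) with hs
  have h3 : -(t * Real.log t) * Real.exp s * (p - 1) = t * (-(s * Real.exp s)) := by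
    rw [hs]; ring
  have key := exp_key s
  nlinarith [mul_le_mul_of_nonneg_left key ht0.le]

lemma ineq3 {t p : ℝ} (ht0 : 0 < t) (hp : 1 < p) :
    t * Real.log t * (p - 1) ≤ t ^ p - t := by
  rw [rpow_eq ht0]
  have h := Real.add_one_le_exp (Real.log t * (p - 1))
  nlinarith [ht0.le]

lemma ineq4 {t p : ℝ} (ht0 : 0 < t) (hp : 1 < p) :
    t ^ p - t ≤ t * Real.log t * t ^ (p - 1) * (p - 1) := by
  rw [rpow_eq' ht0, rpow_eq ht0]
  set s : ℝ := Real.log t * (p - 1) with hs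
  have h3 : t * Real.log t * Real.exp s * (p - 1) = t * (s * Real.exp s) := by
    rw [hs]; ring
  have key := exp_key s
  nlinarith [mul_le_mul_of_nonneg_left key ht0.le]

lemma ineq5 {t u δ : ℝ} (ht : 1 ≤ t) (hδ : 0 < δ) :
    t * Real.log t * t ^ u * δ ≤ t ^ (1 + u + δ) := by
  have ht0 : (0:ℝ) < t := lt_of_lt_of_le one_pos ht
  have hlog : δ * Real.log t ≤ t ^ δ := by
    have := Real.log_le_sub_one_of_pos (Real.rpow_pos_of_pos ht0 δ)
    rw [Real.log_rpow ht0] at this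
    nlinarith [Real.rpow_pos_of_pos ht0 δ]
  have htq : t * t ^ u = t ^ (1 + u) := by
    nth_rewrite 1 [← Real.rpow_one t]
    rw [← Real.rpow_add ht0]
  have hsplit : t ^ (1 + u + δ) = t ^ (1 + u) * t ^ δ := Real.rpow_add ht0 _ δ
  calc t * Real.log t * t ^ u * δ = (δ * Real.log t) * (t * t ^ u) := by ring
    _ ≤ t ^ δ * t ^ (1 + u) := by
        rw [htq]
        exact mul_le_mul hlog le_rfl (by positivity) (by positivity)
    _ = t ^ (1 + u + δ) := by rw [hsplit]; ring

/-- Integrand of `entPos`. -/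
def negpart (a : ℝ≥0∞) : ℝ≥0∞ := ENNReal.ofReal (-(a.toReal * Real.log a.toReal))
/-- Integrand of `entNeg`. -/
def pospart (a : ℝ≥0∞) : ℝ≥0∞ := ENNReal.ofReal (a.toReal * Real.log a.toReal)

lemma negpart_top : negpart ⊤ = 0 := by simp [negpart]
lemma pospart_top : pospart ⊤ = 0 := by simp [pospart]
lemma negpart_zero : negpart 0 = 0 := by simp [negpart]
lemma pospart_zero : pospart 0 = 0 := by simp [pospart]

lemma repr_pos {a : ℝ≥0∞} (ha : a ≠ ⊤) (ha0 : a ≠ 0) :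
    ∃ t : ℝ, 0 < t ∧ a = ENNReal.ofReal t :=
  ⟨a.toReal, ENNReal.toReal_pos ha0 ha, (ENNReal.ofReal_toReal ha).symm⟩

lemma E1 (a : ℝ≥0∞) {p : ℝ} (hp : 1 < p) :
    a - a ^ p ≤ negpart a * ENNReal.ofReal (p - 1) := by
  rcases eq_or_ne a ⊤ with rfl | ha
  · rw [ENNReal.top_rpow_of_pos (by linarith), ENNReal.sub_top]
    exact zero_le
  rcases eq_or_ne a 0 with rfl | ha0
  · rw [zero_tsub]; exact zero_le
  obtain ⟨t, ht0, rfl⟩ := repr_pos ha ha0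
  rw [negpart, ENNReal.toReal_ofReal ht0.le, ENNReal.ofReal_rpow_of_pos ht0,
    ← ENNReal.ofReal_sub _ (Real.rpow_nonneg ht0.le p),
    ← ENNReal.ofReal_mul' (by linarith : (0:ℝ) ≤ p - 1)]
  exact ENNReal.ofReal_le_ofReal (by nlinarith [ineq1 ht0 hp])

lemma E2 (a : ℝ≥0∞) {p : ℝ} (hp : 1 < p) :
    negpart a * a ^ (p - 1) * ENNReal.ofReal (p - 1) ≤ a - a ^ p := by
  rcases eq_or_ne a ⊤ with rfl | ha
  · rw [negpart_top, zero_mul, zero_mul]; exact zero_le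
  rcases eq_or_ne a 0 with rfl | ha0
  · rw [negpart_zero, zero_mul, zero_mul]; exact zero_le
  obtain ⟨t, ht0, rfl⟩ := repr_pos ha ha0
  rw [negpart, ENNReal.toReal_ofReal ht0.le, ENNReal.ofReal_rpow_of_pos ht0,
    ENNReal.ofReal_rpow_of_pos ht0,
    ← ENNReal.ofReal_sub _ (Real.rpow_nonneg ht0.le p),
    ← ENNReal.ofReal_mul' (Real.rpow_nonneg ht0.le _),
    ← ENNReal.ofReal_mul' (by linarith : (0:ℝ) ≤ p - 1)]
  exact ENNReal.ofReal_le_ofReal (ineq2 ht0 hp)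

lemma E3 (a : ℝ≥0∞) {p : ℝ} (hp : 1 < p) :
    pospart a * ENNReal.ofReal (p - 1) ≤ a ^ p - a := by
  rcases eq_or_ne a ⊤ with rfl | ha
  · rw [pospart_top, zero_mul]; exact zero_le
  rcases eq_or_ne a 0 with rfl | ha0
  · rw [pospart_zero, zero_mul]; exact zero_le
  obtain ⟨t, ht0, rfl⟩ := repr_pos ha ha0
  rw [pospart, ENNReal.toReal_ofReal ht0.le, ENNReal.ofReal_rpow_of_pos ht0,
    ← ENNReal.ofReal_sub _ ht0.le,
    ← ENNReal.ofReal_mul' (by linarith : (0:ℝ) ≤ p - 1)]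
  exact ENNReal.ofReal_le_ofReal (ineq3 ht0 hp)

lemma E4 (a : ℝ≥0∞) {p : ℝ} (hp : 1 < p) :
    a ^ p - a ≤ pospart a * a ^ (p - 1) * ENNReal.ofReal (p - 1) := by
  rcases eq_or_ne a ⊤ with rfl | ha
  · rw [ENNReal.top_rpow_of_pos (by linarith), ENNReal.sub_top]
    exact zero_le
  rcases eq_or_ne a 0 with rfl | ha0
  · rw [ENNReal.zero_rpow_of_pos (by linarith), zero_tsub]; exact zero_le
  obtain ⟨t, ht0, rfl⟩ := repr_pos ha ha0
  rw [pospart, ENNReal.toReal_ofReal ht0.le, ENNReal.ofReal_rpow_of_pos ht0,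
    ENNReal.ofReal_rpow_of_pos ht0,
    ← ENNReal.ofReal_sub _ ht0.le,
    ← ENNReal.ofReal_mul' (Real.rpow_nonneg ht0.le _),
    ← ENNReal.ofReal_mul' (by linarith : (0:ℝ) ≤ p - 1)]
  exact ENNReal.ofReal_le_ofReal (ineq4 ht0 hp)

lemma E5 (a : ℝ≥0∞) {u v : ℝ} (huv : u ≤ v) :
    pospart a * a ^ u ≤ pospart a * a ^ v := by
  rcases le_or_gt a.toReal 1 with ht | ht
  · have h0 : pospart a = 0 := by
      rw [pospart, ENNReal.ofReal_eq_zero]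
      exact mul_nonpos_of_nonneg_of_nonpos ENNReal.toReal_nonneg
        (Real.log_nonpos ENNReal.toReal_nonneg ht)
    rw [h0, zero_mul, zero_mul]
  · have ha : a ≠ ⊤ := by intro h; rw [h] at ht; norm_num at ht
    have h1a : (1:ℝ≥0∞) ≤ a := by
      rw [← ENNReal.ofReal_toReal ha, ← ENNReal.ofReal_one]
      exact ENNReal.ofReal_le_ofReal ht.le
    exact mul_le_mul_right (ENNReal.rpow_le_rpow_of_exponent_le h1a huv) _

lemma E6 (a : ℝ≥0∞) {u v : ℝ} (huv : u ≤ v) :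
    negpart a * a ^ v ≤ negpart a * a ^ u := by
  rcases le_or_gt 1 a with ht | ht
  · have h0 : negpart a = 0 := by
      rw [negpart, ENNReal.ofReal_eq_zero, neg_nonpos]
      rcases eq_or_ne a ⊤ with rfl | ha
      · simp
      · refine mul_nonneg ENNReal.toReal_nonneg (Real.log_nonneg ?_)
        have := ENNReal.toReal_mono ha ht
        simpa using this
    rw [h0, zero_mul, zero_mul]
  · exact mul_le_mul_right
      (ENNReal.rpow_le_rpow_of_exponent_ge ht.le huv) _

lemma E7 (a : ℝ≥0∞) {u δ : ℝ} (hu : 0 ≤ u) (hδ : 0 < δ) :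
    pospart a * a ^ u * ENNReal.ofReal δ ≤ a ^ (1 + u + δ) := by
  rcases le_or_gt a.toReal 1 with ht | ht
  · have h0 : pospart a = 0 := by
      rw [pospart, ENNReal.ofReal_eq_zero]
      exact mul_nonpos_of_nonneg_of_nonpos ENNReal.toReal_nonneg
        (Real.log_nonpos ENNReal.toReal_nonneg ht)
    rw [h0, zero_mul, zero_mul]; exact zero_le
  · have ha : a ≠ ⊤ := by intro h; rw [h] at ht; norm_num at ht
    have ha0 : a ≠ 0 := by intro h; rw [h] at ht; norm_num at ht
    obtain ⟨t, ht0, rfl⟩ := repr_pos ha ha0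
    rw [ENNReal.toReal_ofReal ht0.le] at ht
    rw [pospart, ENNReal.toReal_ofReal ht0.le, ENNReal.ofReal_rpow_of_pos ht0,
      ENNReal.ofReal_rpow_of_pos ht0,
      ← ENNReal.ofReal_mul' (Real.rpow_nonneg ht0.le _),
      ← ENNReal.ofReal_mul' hδ.le]
    exact ENNReal.ofReal_le_ofReal (ineq5 ht.le hδ)

lemma rpow_tendsto_one {a : ℝ≥0∞} (ha : a ≠ ⊤) (ha0 : a ≠ 0) {s : ℕ → ℝ}
    (hs : Filter.Tendsto s atTop (nhds 0)) :
    Filter.Tendsto (fun n => a ^ s n) atTop (nhds 1) := by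
  obtain ⟨t, ht0, rfl⟩ := repr_pos ha ha0
  have hcont : Filter.Tendsto (fun n => t ^ s n) atTop (nhds 1) := by
    have : ContinuousAt (fun e : ℝ => t ^ e) 0 :=
      Real.continuousAt_const_rpow ht0.ne'
    have h := this.tendsto.comp hs
    simpa [Real.rpow_zero, Function.comp_def] using h
  have h2 : Filter.Tendsto (fun n => ENNReal.ofReal (t ^ s n)) atTop
      (nhds (ENNReal.ofReal 1)) := (ENNReal.continuous_ofReal.tendsto 1).comp hcont
  simp only [ENNReal.ofReal_one] at h2
  refine h2.congr fun n => ?_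
  rw [ENNReal.ofReal_rpow_of_pos ht0]

lemma E8 (a : ℝ≥0∞) :
    ⨆ n : ℕ, negpart a * a ^ (1 / ((n:ℝ) + 1)) = negpart a := by
  rcases eq_or_ne (negpart a) 0 with h0 | h0
  · simp [h0]
  have ha : a ≠ ⊤ := by
    intro h; rw [h, negpart_top] at h0; exact h0 rfl
  have ha0 : a ≠ 0 := by
    intro h; rw [h, negpart_zero] at h0; exact h0 rfl
  have ha1 : a ≤ 1 := by
    by_contra hlt
    push_neg at hlt
    apply h0
    rw [negpart, ENNReal.ofReal_eq_zero, neg_nonpos]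
    refine mul_nonneg ENNReal.toReal_nonneg (Real.log_nonneg ?_)
    have := ENNReal.toReal_mono ha hlt.le
    simpa using this
  apply le_antisymm
  · refine iSup_le fun n => ?_
    calc negpart a * a ^ (1 / ((n:ℝ) + 1)) ≤ negpart a * 1 :=
          mul_le_mul_right (ENNReal.rpow_le_one ha1 (by positivity)) _
      _ = negpart a := mul_one _
  · have htend : Filter.Tendsto (fun n : ℕ => negpart a * a ^ (1 / ((n:ℝ) + 1)))
        atTop (nhds (negpart a)) := by
      have h1 : Filter.Tendsto (fun n : ℕ => a ^ (1 / ((n:ℝ) + 1))) atTop (nhds 1) :=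
        rpow_tendsto_one ha ha0 tendsto_one_div_add_atTop_nhds_zero_nat
      have := ENNReal.Tendsto.const_mul (a := negpart a) h1 (Or.inl one_ne_zero)
      simpa using this
    exact le_of_tendsto' htend fun n => le_iSup
      (fun n : ℕ => negpart a * a ^ (1 / ((n:ℝ) + 1))) n

lemma E9 (a : ℝ≥0∞) {s : ℝ} (hs : 0 < s) :
    ⨅ n : ℕ, pospart a * a ^ (s / ((n:ℝ) + 1)) = pospart a := by
  rcases le_or_gt a.toReal 1 with ht | ht
  · have h0 : pospart a = 0 := by
      rw [pospart, ENNReal.ofReal_eq_zero]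
      exact mul_nonpos_of_nonneg_of_nonpos ENNReal.toReal_nonneg
        (Real.log_nonpos ENNReal.toReal_nonneg ht)
    simp [h0]
  · have ha : a ≠ ⊤ := by intro h; rw [h] at ht; norm_num at ht
    have ha0 : a ≠ 0 := by intro h; rw [h] at ht; norm_num at ht
    have h1a : (1:ℝ≥0∞) ≤ a := by
      rw [← ENNReal.ofReal_toReal ha, ← ENNReal.ofReal_one]
      exact ENNReal.ofReal_le_ofReal ht.le
    have hfin : pospart a ≠ ⊤ := ENNReal.ofReal_ne_top
    apply le_antisymm
    · have htend : Filter.Tendsto (fun n : ℕ => pospart a * a ^ (s / ((n:ℝ) + 1)))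
          atTop (nhds (pospart a)) := by
        have hsn : Filter.Tendsto (fun n : ℕ => s / ((n:ℝ) + 1)) atTop (nhds 0) := by
          have := tendsto_one_div_add_atTop_nhds_zero_nat.const_mul s
          simpa [div_eq_mul_inv, mul_comm] using this
        have h1 : Filter.Tendsto (fun n : ℕ => a ^ (s / ((n:ℝ) + 1))) atTop (nhds 1) :=
          rpow_tendsto_one ha ha0 hsn
        have := ENNReal.Tendsto.const_mul (a := pospart a) h1 (Or.inl one_ne_zero)
        simpa using this
      exact ge_of_tendsto' htend fun n => iInf_le
        (fun n : ℕ => pospart a * a ^ (s / ((n:ℝ) + 1))) n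
    · refine le_iInf fun n => ?_
      calc pospart a = pospart a * 1 := (mul_one _).symm
        _ ≤ pospart a * a ^ (s / ((n:ℝ) + 1)) := by
            refine mul_le_mul_right ?_ _
            have : (1:ℝ≥0∞) = (1:ℝ≥0∞) ^ (s / ((n:ℝ) + 1)) := (ENNReal.one_rpow _).symm
            rw [this]
            exact ENNReal.rpow_le_rpow h1a (by positivity)

end EntAux

lemma coe_ennreal_eq_toReal {x : ℝ≥0∞} (hx : x ≠ ⊤) :
    (x : EReal) = ((x.toReal : ℝ) : EReal) := by
  nth_rewrite 1 [← ENNReal.ofReal_toReal hx]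
  rw [EReal.coe_ennreal_ofReal, max_eq_left ENNReal.toReal_nonneg]

/-- If `lim_{p→1+} h_p(f) > -∞`, then the Shannon entropy `h(f)` is well defined
(possibly `+∞`) and equals this limit. -/
theorem entropy_eq_lim_renyi_right (n : ℕ) (f : EuclideanSpace ℝ (Fin n) → ℝ≥0∞)
    (hf : IsDensity n f) (L : EReal)
    (hL : Tendsto (fun p : ℝ => renyi n f p) (nhdsWithin 1 (Ioi 1)) (nhds L))
    (hbot : ⊥ < L) :
    EntDefined n f ∧ entropy n f = L := by
  obtain ⟨mf, hint⟩ := hf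
  set l : Filter ℝ := nhdsWithin 1 (Ioi 1) with hldef
  -- measurability
  have mfp : ∀ p : ℝ, Measurable fun x => f x ^ p := fun p =>
    (ENNReal.continuous_rpow_const.measurable).comp mf
  have mtr : Measurable fun x => (f x).toReal := ENNReal.measurable_toReal.comp mf
  have mNeg : Measurable fun x => EntAux.negpart (f x) :=
    ENNReal.measurable_ofReal.comp ((mtr.mul (Real.measurable_log.comp mtr)).neg)
  have mPos : Measurable fun x => EntAux.pospart (f x) :=
    ENNReal.measurable_ofReal.comp (mtr.mul (Real.measurable_log.comp mtr))
  set G : ℝ → ℝ≥0∞ := fun p => ∫⁻ x, f x ^ p with hGdef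
  have hentPos : entPos n f = ∫⁻ x, EntAux.negpart (f x) := rfl
  have hentNeg : entNeg n f = ∫⁻ x, EntAux.pospart (f x) := rfl
  have hmem : ∀ᶠ p in l, p ∈ Ioi (1:ℝ) := eventually_mem_nhdsWithin
  -- Step 1: get p0 with G p0 ≠ ⊤
  obtain ⟨b, hb1, hb2⟩ := exists_between hbot
  have hev : ∀ᶠ p in l, b < renyi n f p := hL.eventually (eventually_gt_nhds hb2)
  obtain ⟨p0, hbp0, hp0'⟩ := (hev.and hmem).exists
  rw [mem_Ioi] at hp0'
  have hGp0 : G p0 ≠ ⊤ := by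
    intro htop
    have hneg : ((1:ℝ) - p0)⁻¹ < 0 := by
      rw [inv_lt_zero]; linarith
    have : renyi n f p0 = ⊥ := by
      rw [renyi]
      have : (∫⁻ x, f x ^ p0) = ⊤ := htop
      rw [this, ENNReal.log_top, EReal.coe_mul_top_of_neg hneg]
    rw [this] at hbp0
    exact absurd hbp0 (not_lt_bot)
  -- p1, δ
  set p1 : ℝ := (1 + p0)/2 with hp1def
  have hp1 : 1 < p1 := by rw [hp1def]; linarith
  have hp1p0 : p1 < p0 := by rw [hp1def]; linarith
  set δ : ℝ := p0 - p1 with hδdef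
  have hδ : 0 < δ := by rw [hδdef]; linarith
  set c : ℝ → ℝ≥0∞ := fun p => ENNReal.ofReal (p - 1) with hcdef
  have hc0 : ∀ p : ℝ, 1 < p → c p ≠ 0 := fun p hp => by
    simp only [hcdef, ne_eq, ENNReal.ofReal_eq_zero, not_le]; linarith
  have hcT : ∀ p : ℝ, c p ≠ ⊤ := fun p => ENNReal.ofReal_ne_top
  set D : ℝ → ℝ≥0∞ := fun p => ∫⁻ x, (f x - f x ^ p) with hDdef
  set E : ℝ → ℝ≥0∞ := fun p => ∫⁻ x, (f x ^ p - f x) with hEdef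
  -- integral-level bounds
  have hD_upper : ∀ p : ℝ, 1 < p → D p / c p ≤ entPos n f := by
    intro p hp
    rw [ENNReal.div_le_iff_le_mul (Or.inl (hc0 p hp)) (Or.inl (hcT p))]
    calc D p ≤ ∫⁻ x, EntAux.negpart (f x) * c p := by
          refine lintegral_mono fun x => ?_
          rw [hcdef]
          exact EntAux.E1 (f x) hp
      _ = entPos n f * c p := by
          rw [hentPos, lintegral_mul_const' (c p) _ (hcT p)]
  have hm_le_D : ∀ (u p : ℝ), 1 < p → p - 1 ≤ u →
      (∫⁻ x, EntAux.negpart (f x) * f x ^ u) ≤ D p / c p := by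
    intro u p hp hup
    rw [ENNReal.le_div_iff_mul_le (Or.inl (hc0 p hp)) (Or.inl (hcT p))]
    calc (∫⁻ x, EntAux.negpart (f x) * f x ^ u) * c p
        = ∫⁻ x, EntAux.negpart (f x) * f x ^ u * c p := by
          rw [lintegral_mul_const' (c p) _ (hcT p)]
      _ ≤ ∫⁻ x, EntAux.negpart (f x) * f x ^ (p-1) * c p := by
          refine lintegral_mono fun x => ?_
          exact mul_le_mul_left (EntAux.E6 (f x) hup) _
      _ ≤ D p := by
          refine lintegral_mono fun x => ?_
          rw [hcdef]
          exact EntAux.E2 (f x) hp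
  have hE_lower : ∀ p : ℝ, 1 < p → entNeg n f ≤ E p / c p := by
    intro p hp
    rw [ENNReal.le_div_iff_mul_le (Or.inl (hc0 p hp)) (Or.inl (hcT p))]
    calc entNeg n f * c p = ∫⁻ x, EntAux.pospart (f x) * c p := by
          rw [hentNeg, lintegral_mul_const' (c p) _ (hcT p)]
      _ ≤ E p := by
          refine lintegral_mono fun x => ?_
          rw [hcdef]
          exact EntAux.E3 (f x) hp
  have hE_upper : ∀ (u p : ℝ), 1 < p → p - 1 ≤ u →
      E p / c p ≤ ∫⁻ x, EntAux.pospart (f x) * f x ^ u := by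
    intro u p hp hup
    rw [ENNReal.div_le_iff_le_mul (Or.inl (hc0 p hp)) (Or.inl (hcT p))]
    calc E p ≤ ∫⁻ x, EntAux.pospart (f x) * f x ^ (p-1) * c p := by
          refine lintegral_mono fun x => ?_
          rw [hcdef]
          exact EntAux.E4 (f x) hp
      _ ≤ ∫⁻ x, EntAux.pospart (f x) * f x ^ u * c p := by
          refine lintegral_mono fun x => ?_
          exact mul_le_mul_left (EntAux.E5 (f x) hup) _
      _ = (∫⁻ x, EntAux.pospart (f x) * f x ^ u) * c p := by
          rw [lintegral_mul_const' (c p) _ (hcT p)]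
  have hM_fin : (∫⁻ x, EntAux.pospart (f x) * f x ^ (p1 - 1)) ≠ ⊤ := by
    have hb : (∫⁻ x, EntAux.pospart (f x) * f x ^ (p1-1)) ≤ G p0 / ENNReal.ofReal δ := by
      rw [ENNReal.le_div_iff_mul_le
        (Or.inl (by simp [ENNReal.ofReal_eq_zero]; linarith)) (Or.inl ENNReal.ofReal_ne_top)]
      calc (∫⁻ x, EntAux.pospart (f x) * f x ^ (p1-1)) * ENNReal.ofReal δ
          = ∫⁻ x, EntAux.pospart (f x) * f x ^ (p1-1) * ENNReal.ofReal δ := by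
            rw [lintegral_mul_const' _ _ ENNReal.ofReal_ne_top]
        _ ≤ ∫⁻ x, f x ^ (1 + (p1 - 1) + δ) :=
            lintegral_mono fun x => EntAux.E7 (f x) (by linarith) hδ
        _ = G p0 := by
            rw [hGdef]
            congr 1
            funext x
            congr 1
            rw [hδdef]; ring
    exact ne_top_of_le_ne_top
      (ENNReal.div_lt_top hGp0 (by simp [ENNReal.ofReal_eq_zero]; linarith)).ne hb
  have hentNegFin : entNeg n f ≠ ⊤ := by
    refine ne_top_of_le_ne_top hM_fin ?_
    rw [hentNeg]
    apply lintegral_mono fun x => ?_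
    calc EntAux.pospart (f x) = EntAux.pospart (f x) * f x ^ (0:ℝ) := by
          rw [ENNReal.rpow_zero, mul_one]
      _ ≤ EntAux.pospart (f x) * f x ^ (p1 - 1) := EntAux.E5 (f x) (by linarith)
  -- sup identity
  have hsup : (⨆ m : ℕ, ∫⁻ x, EntAux.negpart (f x) * f x ^ (1/((m:ℝ)+1))) = entPos n f := by
    rw [hentPos, ← lintegral_iSup]
    · congr 1; funext x; exact EntAux.E8 (f x)
    · intro m
      exact mNeg.mul ((ENNReal.continuous_rpow_const.measurable).comp mf)
    · intro i j hij
      intro x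
      apply EntAux.E6 (f x)
      have h1 : (0:ℝ) < (i:ℝ) + 1 := by positivity
      have h2 : (0:ℝ) < (j:ℝ) + 1 := by positivity
      rw [div_le_div_iff₀ h2 h1]
      have := (Nat.cast_le (α := ℝ)).2 hij
      nlinarith
  -- inf identity
  have hinf : (⨅ m : ℕ, ∫⁻ x, EntAux.pospart (f x) * f x ^ ((p1-1)/((m:ℝ)+1))) = entNeg n f := by
    rw [hentNeg, ← lintegral_iInf]
    · congr 1; funext x; exact EntAux.E9 (f x) (by linarith)
    · intro m
      exact mPos.mul ((ENNReal.continuous_rpow_const.measurable).comp mf)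
    · intro i j hij
      intro x
      apply EntAux.E5 (f x)
      have h1 : (0:ℝ) < (i:ℝ) + 1 := by positivity
      have h2 : (0:ℝ) < (j:ℝ) + 1 := by positivity
      rw [div_le_div_iff₀ h2 h1]
      have hp1' : (0:ℝ) ≤ p1 - 1 := by linarith
      have := (Nat.cast_le (α := ℝ)).2 hij
      nlinarith
    · -- finiteness at m = 0
      refine ne_top_of_le_ne_top hM_fin ?_
      apply lintegral_mono fun x => ?_
      apply EntAux.E5 (f x)
      rw [div_le_iff₀ (by positivity : (0:ℝ) < ((0:ℕ):ℝ) + 1)]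
      nlinarith
  -- Tendsto of D p / c p
  have hDtend : Tendsto (fun p => D p / c p) l (nhds (entPos n f)) := by
    refine tendsto_order.2 ⟨?_, ?_⟩
    · intro b' hb'
      rw [← hsup] at hb'
      obtain ⟨m, hm⟩ := lt_iSup_iff.1 hb'
      have hq : (1:ℝ) < 1 + 1/((m:ℝ)+1) := by
        have : (0:ℝ) < 1/((m:ℝ)+1) := by positivity
        linarith
      have hIoc : Ioc (1:ℝ) (1 + 1/((m:ℝ)+1)) ∈ l := Ioc_mem_nhdsGT_of_mem ⟨le_rfl, hq⟩
      filter_upwards [hIoc] with p hp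
      exact lt_of_lt_of_le hm (hm_le_D _ p hp.1 (by linarith [hp.2]))
    · intro b' hb'
      filter_upwards [hmem] with p hp
      exact lt_of_le_of_lt (hD_upper p hp) hb'
  -- Tendsto of E p / c p
  have hEtend : Tendsto (fun p => E p / c p) l (nhds (entNeg n f)) := by
    refine tendsto_order.2 ⟨?_, ?_⟩
    · intro b' hb'
      filter_upwards [hmem] with p hp
      exact lt_of_lt_of_le hb' (hE_lower p hp)
    · intro b' hb'
      rw [← hinf] at hb'
      obtain ⟨m, hm⟩ := iInf_lt_iff.1 hb'
      have he : (0:ℝ) < (p1-1)/((m:ℝ)+1) := by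
        apply div_pos (by linarith) (by positivity)
      have hq : (1:ℝ) < 1 + (p1-1)/((m:ℝ)+1) := by linarith
      have hIoc : Ioc (1:ℝ) (1 + (p1-1)/((m:ℝ)+1)) ∈ l := Ioc_mem_nhdsGT_of_mem ⟨le_rfl, hq⟩
      filter_upwards [hIoc] with p hp
      exact lt_of_le_of_lt (hE_upper _ p hp.1 (by linarith [hp.2])) hm
  -- key identity
  have hkey : ∀ p : ℝ, 1 + E p = G p + D p := by
    intro p
    have h1 : ∫⁻ x, (f x + (f x ^ p - f x)) = 1 + E p := by
      rw [lintegral_add_left mf, hint]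
    have h2 : ∫⁻ x, (f x ^ p + (f x - f x ^ p)) = G p + D p := by
      rw [lintegral_add_left (mfp p)]
    rw [← h1, ← h2]
    congr 1; funext x
    rcases le_total (f x) (f x ^ p) with h | h
    · rw [add_tsub_cancel_of_le h, tsub_eq_zero_of_le h, add_zero]
    · rw [tsub_eq_zero_of_le h, add_zero, add_tsub_cancel_of_le h]
  -- finiteness
  have hDle : ∀ p : ℝ, D p ≤ 1 := by
    intro p
    rw [hDdef, ← hint]
    exact lintegral_mono fun x => tsub_le_self
  have hDfin : ∀ p : ℝ, D p ≠ ⊤ := fun p => ne_top_of_le_ne_top ENNReal.one_ne_top (hDle p)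
  have hEfin : ∀ p : ℝ, 1 < p → p ≤ p1 → E p ≠ ⊤ := by
    intro p hp hpp1
    have h1 : E p / c p ≠ ⊤ :=
      ne_top_of_le_ne_top hM_fin (hE_upper (p1-1) p hp (by linarith))
    have h2 : E p = E p / c p * c p := (ENNReal.div_mul_cancel (hc0 p hp) (hcT p)).symm
    rw [h2]
    exact ENNReal.mul_ne_top h1 (hcT p)
  have hGfin : ∀ p : ℝ, 1 < p → p ≤ p1 → G p ≠ ⊤ := by
    intro p hp hpp1
    have h1 : G p ≤ G p + D p := le_self_add
    rw [← hkey p] at h1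
    exact ne_top_of_le_ne_top
      (ENNReal.add_ne_top.2 ⟨ENNReal.one_ne_top, hEfin p hp hpp1⟩) h1
  -- G p is nonzero
  have hG0 : ∀ p : ℝ, 0 < p → G p ≠ 0 := by
    intro p hp h0
    have hz : ∀ᵐ x, f x ^ p = 0 := (lintegral_eq_zero_iff (mfp p)).1 h0
    have hz' : f =ᵐ[volume] (fun _ => (0:ℝ≥0∞)) := by
      filter_upwards [hz] with x hx
      rcases ENNReal.rpow_eq_zero_iff.1 hx with ⟨h,_⟩|⟨_,h⟩
      · exact h
      · linarith
    have hzero : (∫⁻ x, f x) = 0 := by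
      rw [lintegral_congr_ae hz']
      simp
    rw [hint] at hzero
    exact one_ne_zero hzero
  -- the key real identity
  have hRid : ∀ p : ℝ, 1 < p → p ≤ p1 →
      1 - (G p).toReal = (p-1) * ((D p / c p).toReal - (E p / c p).toReal) := by
    intro p hp hpp1
    have hEf := hEfin p hp hpp1
    have hGf := hGfin p hp hpp1
    have hDf := hDfin p
    have hpne : p - 1 ≠ 0 := ne_of_gt (by linarith)
    have htr : (1:ℝ) + (E p).toReal = (G p).toReal + (D p).toReal := by
      have h := congrArg ENNReal.toReal (hkey p)
      rwa [ENNReal.toReal_add ENNReal.one_ne_top hEf, ENNReal.toReal_add hGf hDf,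
        ENNReal.toReal_one] at h
    have hct' : (c p).toReal = p - 1 := by
      rw [hcdef]
      exact ENNReal.toReal_ofReal (by linarith)
    have hdr : (D p / c p).toReal * (p-1) = (D p).toReal := by
      rw [ENNReal.toReal_div, hct', div_mul_cancel₀ _ hpne]
    have her : (E p / c p).toReal * (p-1) = (E p).toReal := by
      rw [ENNReal.toReal_div, hct', div_mul_cancel₀ _ hpne]
    rw [← hdr, ← her] at htr
    linear_combination htr
  -- renyi in real coordinates
  have hrenyG : ∀ p : ℝ, renyi n f p = (((1 - p)⁻¹ : ℝ) : EReal) * ENNReal.log (G p) :=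
    fun p => rfl
  have hrenyi_eq : ∀ p : ℝ, 1 < p → p ≤ p1 →
      renyi n f p = (((1-p)⁻¹ * Real.log ((G p).toReal) : ℝ) : EReal) := by
    intro p hp hpp1
    rw [hrenyG p, ENNReal.log_pos_real (hG0 p (by linarith)) (hGfin p hp hpp1),
      ← EReal.coe_mul]
  -- squeeze bounds
  have hsq : ∀ p : ℝ, 1 < p → p ≤ p1 →
      ((D p / c p).toReal - (E p / c p).toReal ≤ (1-p)⁻¹ * Real.log ((G p).toReal)
      ∧ (1-p)⁻¹ * Real.log ((G p).toReal) ≤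
        ((D p / c p).toReal - (E p / c p).toReal) / (G p).toReal) := by
    intro p hp hpp1
    have hp' : (0:ℝ) < p - 1 := by linarith
    have hR0 : 0 < (G p).toReal :=
      ENNReal.toReal_pos (hG0 p (by linarith)) (hGfin p hp hpp1)
    have hRid' := hRid p hp hpp1
    have hlog1 : Real.log ((G p).toReal) ≤ (G p).toReal - 1 :=
      Real.log_le_sub_one_of_pos hR0
    have hlog2 : -Real.log ((G p).toReal) ≤ (1 - (G p).toReal)/(G p).toReal := by
      have h := Real.log_le_sub_one_of_pos (inv_pos.2 hR0)
      rw [Real.log_inv] at h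
      have h2 : ((G p).toReal)⁻¹ - 1 = (1 - (G p).toReal)/(G p).toReal := by
        field_simp
      linarith
    have hcoef : (1-p)⁻¹ * Real.log ((G p).toReal) = -(Real.log ((G p).toReal))/(p-1) := by
      rw [show (1:ℝ) - p = -(p-1) by ring, inv_neg, neg_mul, mul_comm,
        ← div_eq_mul_inv, ← neg_div]
    have hW : (D p / c p).toReal - (E p / c p).toReal = (1 - (G p).toReal)/(p-1) := by
      rw [eq_div_iff (ne_of_gt hp')]
      linarith [hRid']
    constructor
    · rw [hcoef, hW, div_le_div_iff₀ hp' hp']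
      nlinarith [hlog1]
    · rw [hcoef, hW, div_right_comm, div_le_div_iff₀ hp' hp']
      nlinarith [mul_le_mul_of_nonneg_right hlog2 hp'.le]
  have hIocp1 : Ioc (1:ℝ) p1 ∈ l := Ioc_mem_nhdsGT_of_mem ⟨le_rfl, hp1⟩
  have he : Tendsto (fun p => (E p / c p).toReal) l (nhds (entNeg n f).toReal) :=
    (ENNReal.tendsto_toReal hentNegFin).comp hEtend
  rcases eq_or_ne (entPos n f) ⊤ with hPtop | hPfin
  · -- entPos = ⊤ : entropy = ⊤
    have hDtop : Tendsto (fun p => D p / c p) l (nhds ⊤) := hPtop ▸ hDtend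
    refine ⟨Or.inr hentNegFin, ?_⟩
    have hrt : Tendsto (fun p : ℝ => renyi n f p) l (nhds (⊤:EReal)) := by
      rw [EReal.tendsto_nhds_top_iff_real]
      intro M
      have hev1 : ∀ᶠ p in l, E p / c p < entNeg n f + 1 :=
        hEtend.eventually (eventually_lt_nhds (ENNReal.lt_add_right hentNegFin one_ne_zero))
      have hb' : ENNReal.ofReal (max (M + ((entNeg n f).toReal + 1)) 0 + 1) < ⊤ :=
        ENNReal.ofReal_lt_top
      have hev2 : ∀ᶠ p in l,
          ENNReal.ofReal (max (M + ((entNeg n f).toReal + 1)) 0 + 1) < D p / c p :=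
        hDtop.eventually (eventually_gt_nhds hb')
      filter_upwards [hev1, hev2, hIocp1] with p h1 h2 hp
      have hcp0 := hc0 p hp.1
      have hDcfin : D p / c p ≠ ⊤ := (ENNReal.div_lt_top (hDfin p) hcp0).ne
      have hENfin : entNeg n f + 1 ≠ ⊤ :=
        ENNReal.add_ne_top.2 ⟨hentNegFin, ENNReal.one_ne_top⟩
      have hEcfin : E p / c p ≠ ⊤ := (h1.trans (lt_top_iff_ne_top.2 hENfin)).ne
      have hdRlow : max (M + ((entNeg n f).toReal + 1)) 0 + 1 ≤ (D p / c p).toReal := by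
        have h3 := (ENNReal.toReal_lt_toReal ENNReal.ofReal_ne_top hDcfin).2 h2
        rw [ENNReal.toReal_ofReal (by positivity)] at h3
        linarith
      have heRup : (E p / c p).toReal < (entNeg n f).toReal + 1 := by
        have h4 := (ENNReal.toReal_lt_toReal hEcfin hENfin).2 h1
        rwa [ENNReal.toReal_add hentNegFin ENNReal.one_ne_top, ENNReal.toReal_one] at h4
      have hlow := (hsq p hp.1 hp.2).1
      rw [hrenyi_eq p hp.1 hp.2, EReal.coe_lt_coe_iff]
      have hmax : M + ((entNeg n f).toReal + 1) ≤ max (M + ((entNeg n f).toReal + 1)) 0 :=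
        le_max_left _ _
      linarith
    have hLeq : L = ⊤ := tendsto_nhds_unique hL hrt
    rw [entropy, hLeq, hPtop, EReal.coe_ennreal_top, coe_ennreal_eq_toReal hentNegFin,
      EReal.top_sub_coe]
  · -- entPos ≠ ⊤ : finite case
    have hd : Tendsto (fun p => (D p / c p).toReal) l (nhds (entPos n f).toReal) :=
      (ENNReal.tendsto_toReal hPfin).comp hDtend
    have hsub : Tendsto (fun p => (D p / c p).toReal - (E p / c p).toReal) l
        (nhds ((entPos n f).toReal - (entNeg n f).toReal)) := hd.sub he
    have hp1tend : Tendsto (fun p : ℝ => p - 1) l (nhds 0) := by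
      have h0 : Tendsto (fun p : ℝ => p - 1) (nhds 1) (nhds 0) := by
        have h := ((continuous_id (X := ℝ)).sub (continuous_const (y := (1:ℝ)))).tendsto (1:ℝ)
        convert h using 2 <;> simp
      exact h0.mono_left nhdsWithin_le_nhds
    have hRtend : Tendsto (fun p => (G p).toReal) l (nhds 1) := by
      have h1 : Tendsto
          (fun p => 1 - (p-1)*((D p/c p).toReal - (E p/c p).toReal)) l (nhds 1) := by
        have h2 := (tendsto_const_nhds (x := (1:ℝ)) (f := l)).sub (hp1tend.mul hsub)
        simpa using h2
      refine Tendsto.congr' ?_ h1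
      filter_upwards [hIocp1] with p hp
      have h3 := hRid p hp.1 hp.2
      linarith
    have hupper : Tendsto (fun p => ((D p/c p).toReal - (E p/c p).toReal)/(G p).toReal) l
        (nhds ((entPos n f).toReal - (entNeg n f).toReal)) := by
      have h := hsub.div hRtend one_ne_zero
      rw [div_one] at h; exact h
    have hvt : Tendsto (fun p => (1-p)⁻¹ * Real.log ((G p).toReal)) l
        (nhds ((entPos n f).toReal - (entNeg n f).toReal)) := by
      refine tendsto_of_tendsto_of_tendsto_of_le_of_le' hsub hupper ?_ ?_
      · filter_upwards [hIocp1] with p hp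
        exact (hsq p hp.1 hp.2).1
      · filter_upwards [hIocp1] with p hp
        exact (hsq p hp.1 hp.2).2
    have hrt : Tendsto (fun p : ℝ => renyi n f p) l
        (nhds ((((entPos n f).toReal - (entNeg n f).toReal : ℝ)) : EReal)) := by
      refine Tendsto.congr' ?_ (EReal.tendsto_coe.2 hvt)
      filter_upwards [hIocp1] with p hp
      exact (hrenyi_eq p hp.1 hp.2).symm
    have hLeq : L = (((entPos n f).toReal - (entNeg n f).toReal : ℝ) : EReal) :=
      tendsto_nhds_unique hL hrt
    refine ⟨Or.inr hentNegFin, ?_⟩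
    rw [entropy, hLeq, coe_ennreal_eq_toReal hPfin, coe_ennreal_eq_toReal hentNegFin,
      ← EReal.coe_sub]
end
end

section
/- Let f be a probability density on R^n that is everywhere defined and lower semicontinuous. Then lim_{p→∞} h_p(f) = −log sup_x f(x). -/
open MeasureTheory Set Filter ENNReal

noncomputable section

/-- For an everywhere-defined lower semicontinuous probability density `f` on `ℝⁿ`,
`lim_{p→∞} h_p(f) = -log sup_x f(x)`. -/
theorem renyi_tendsto_top (n : ℕ) (f : EuclideanSpace ℝ (Fin n) → ℝ≥0∞)
    (hf : IsDensity n f) (hlsc : LowerSemicontinuous f) :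
    Tendsto (fun p : ℝ => renyi n f p) atTop (nhds (-ENNReal.log (⨆ x, f x))) := by
  obtain ⟨hmeas, hint⟩ := hf
  set M := ⨆ x, f x with hMdef
  have hM0 : 0 < M := by
    by_contra h
    push_neg at h
    have hz : ∀ x, f x = 0 := fun x =>
      le_antisymm ((le_iSup f x).trans h) zero_le
    rw [lintegral_congr hz] at hint
    simp at hint
  have key : Tendsto (fun p : ℝ =>
      (((p - 1)⁻¹ : ℝ) : EReal) * ENNReal.log (∫⁻ x, f x ^ p)) atTop
      (nhds (ENNReal.log M)) := by
    rw [tendsto_order]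
    constructor
    · -- lower bound branch
      intro b hb
      obtain ⟨lc, hblc, hlcM⟩ := exists_between hb
      obtain ⟨c, rfl⟩ := ENNReal.log_surjective lc
      have hc0 : 0 < c := by
        rw [← ENNReal.bot_lt_log_iff]
        exact lt_of_le_of_lt bot_le hblc
      have hcM : c < M := ENNReal.log_lt_log_iff.mp hlcM
      have hcT : c ≠ ⊤ := (hcM.trans_le le_top).ne
      obtain ⟨x0, hx0⟩ := lt_iSup_iff.mp hcM
      set U : Set (EuclideanSpace ℝ (Fin n)) := f ⁻¹' Ioi c with hU
      have hUopen : IsOpen U := hlsc.isOpen_preimage c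
      have hUne : U.Nonempty := ⟨x0, hx0⟩
      set v := volume U with hv
      have hv0 : 0 < v := hUopen.measure_pos volume hUne
      have hcv1 : c * v ≤ 1 := by
        calc c * v = ∫⁻ _ in U, c := (setLIntegral_const U c).symm
          _ ≤ ∫⁻ x in U, f x := setLIntegral_mono hmeas (fun x hx => le_of_lt hx)
          _ ≤ ∫⁻ x, f x := setLIntegral_le_lintegral U f
          _ = 1 := hint
      have hvT : v ≠ ⊤ := by
        intro hvt
        rw [hvt, ENNReal.mul_top hc0.ne'] at hcv1
        exact ENNReal.top_ne_one (le_antisymm hcv1 le_top)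
      set r : ℝ := Real.log c.toReal with hr
      set s : ℝ := Real.log v.toReal with hs
      have hlogc : ENNReal.log c = (r : EReal) :=
        ENNReal.log_pos_real' (ENNReal.toReal_pos hc0.ne' hcT)
      have hlogv : ENNReal.log v = (s : EReal) :=
        ENNReal.log_pos_real' (ENNReal.toReal_pos hv0.ne' hvT)
      -- the real-valued lower bound sequence tends to r
      have hreal : Tendsto (fun p : ℝ => (p - 1)⁻¹ * (p * r + s)) atTop (nhds r) := by
        have h1 : Tendsto (fun p : ℝ => (p - 1)⁻¹) atTop (nhds 0) :=
          tendsto_inv_atTop_zero.comp (tendsto_atTop_add_const_right _ (-1) tendsto_id)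
        have h2 : Tendsto (fun p : ℝ => r + (r + s) * (p - 1)⁻¹) atTop (nhds (r + (r + s) * 0)) :=
          tendsto_const_nhds.add (h1.const_mul (r + s))
        rw [mul_zero, add_zero] at h2
        refine h2.congr' ?_
        filter_upwards [eventually_gt_atTop 1] with p hp
        have hp1 : p - 1 ≠ 0 := by intro h; linarith [h]
        field_simp
        ring
      have hrealE : Tendsto (fun p : ℝ => (((p - 1)⁻¹ * (p * r + s) : ℝ) : EReal)) atTop
          (nhds ((r : ℝ) : EReal)) := EReal.tendsto_coe.mpr hreal
      have hble : b < (r : EReal) := hlogc ▸ hblc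
      filter_upwards [eventually_gt_atTop 1, hrealE.eventually_const_lt hble] with p hp hbp
      refine lt_of_lt_of_le hbp ?_
      have hppos : (0 : ℝ) < p := lt_trans one_pos hp
      -- ∫ f^p ≥ c^p * v
      have hlow : c ^ p * v ≤ ∫⁻ x, f x ^ p := by
        calc c ^ p * v = ∫⁻ _ in U, c ^ p := (setLIntegral_const U (c ^ p)).symm
          _ ≤ ∫⁻ x in U, f x ^ p := setLIntegral_mono (hmeas.pow_const p)
              (fun x hx => ENNReal.rpow_le_rpow (le_of_lt hx) hppos.le)
          _ ≤ ∫⁻ x, f x ^ p := setLIntegral_le_lintegral U _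
      have hloglow : ((p * r + s : ℝ) : EReal) ≤ ENNReal.log (∫⁻ x, f x ^ p) := by
        have := ENNReal.log_monotone hlow
        rw [ENNReal.log_mul_add, ENNReal.log_rpow, hlogc, hlogv] at this
        refine le_trans (le_of_eq ?_) this
        rw [EReal.coe_add, EReal.coe_mul]
      calc ((((p - 1)⁻¹ * (p * r + s) : ℝ)) : EReal)
          = (((p - 1)⁻¹ : ℝ) : EReal) * ((p * r + s : ℝ) : EReal) := EReal.coe_mul _ _
        _ ≤ (((p - 1)⁻¹ : ℝ) : EReal) * ENNReal.log (∫⁻ x, f x ^ p) := by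
            apply mul_le_mul_of_nonneg_left hloglow
            exact EReal.coe_nonneg.mpr (inv_nonneg.mpr (by linarith))
    · -- upper bound branch
      intro b hb
      have hMtop : M ≠ ⊤ := by
        intro h
        rw [h, ENNReal.log_top] at hb
        exact (not_top_lt hb)
      set r : ℝ := Real.log M.toReal with hr
      have hlogM : ENNReal.log M = (r : EReal) :=
        ENNReal.log_pos_real' (ENNReal.toReal_pos hM0.ne' hMtop)
      filter_upwards [eventually_gt_atTop 1] with p hp
      refine lt_of_le_of_lt ?_ hb
      have hp1 : (0 : ℝ) < p - 1 := by linarith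
      -- ∫ f^p ≤ M^(p-1)
      have hup : ∫⁻ x, f x ^ p ≤ M ^ (p - 1) := by
        calc ∫⁻ x, f x ^ p ≤ ∫⁻ x, M ^ (p - 1) * f x := by
              apply lintegral_mono
              intro x
              show f x ^ p ≤ M ^ (p - 1) * f x
              rcases eq_or_ne (f x) 0 with hfx | hfx
              · rw [hfx, ENNReal.zero_rpow_of_pos (by linarith)]
                exact zero_le
              · have hfxt : f x ≠ ⊤ := by
                  intro h
                  exact hMtop (top_le_iff.mp (h ▸ le_iSup f x))
                have hsplit : f x ^ p = f x ^ (p - 1) * f x ^ (1 : ℝ) := by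
                  rw [← ENNReal.rpow_add _ _ hfx hfxt]
                  norm_num
                calc f x ^ p = f x ^ (p - 1) * f x := by
                      rw [hsplit, ENNReal.rpow_one]
                  _ ≤ M ^ (p - 1) * f x :=
                      mul_le_mul_left (ENNReal.rpow_le_rpow (le_iSup f x) hp1.le) _
          _ = M ^ (p - 1) * ∫⁻ x, f x := lintegral_const_mul _ hmeas
          _ = M ^ (p - 1) := by rw [hint, mul_one]
      have hlog : ENNReal.log (∫⁻ x, f x ^ p) ≤ (((p - 1) * r : ℝ) : EReal) := by
        have := ENNReal.log_monotone hup
        rw [ENNReal.log_rpow, hlogM] at this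
        exact this.trans (le_of_eq (EReal.coe_mul _ _).symm)
      calc (((p - 1)⁻¹ : ℝ) : EReal) * ENNReal.log (∫⁻ x, f x ^ p)
          ≤ (((p - 1)⁻¹ : ℝ) : EReal) * (((p - 1) * r : ℝ) : EReal) := by
            apply mul_le_mul_of_nonneg_left hlog
            exact EReal.coe_nonneg.mpr (inv_nonneg.mpr (by linarith))
        _ = (((p - 1)⁻¹ * ((p - 1) * r) : ℝ) : EReal) := (EReal.coe_mul _ _).symm
        _ = ENNReal.log M := by
            rw [hlogM]
            congr 1
            field_simp
  have hneg : Tendsto (fun p : ℝ =>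
      -((((p - 1)⁻¹ : ℝ) : EReal) * ENNReal.log (∫⁻ x, f x ^ p))) atTop
      (nhds (-ENNReal.log M)) := key.neg
  refine hneg.congr fun p => ?_
  rw [renyi]
  rw [show ((1 : ℝ) - p)⁻¹ = -((p - 1)⁻¹) by rw [← inv_neg]; ring_nf]
  rw [EReal.coe_neg, EReal.neg_mul]
end
end

section
/- For any random vector X in R^n with finite covariance matrix, and X* a random vector with density the spherically symmetric decreasing rearrangement of the density of X, one has E‖X*‖² ≤ E‖X − E[X]‖², i.e., tr Cov(X*) ≤ tr Cov(X). In particular, for n = 1, Var(X*) ≤ Var(X). -/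
open MeasureTheory Set Filter ENNReal

noncomputable section

lemma vol_ball_eq (n : ℕ) (hn : 0 < n) {r : ℝ} (hr : 0 ≤ r) :
    volume (Metric.ball (0 : EuclideanSpace ℝ (Fin n)) r)
      = ENNReal.ofReal (r ^ n) * volume (Metric.ball (0 : EuclideanSpace ℝ (Fin n)) 1) := by
  haveI : Nontrivial (EuclideanSpace ℝ (Fin n)) := by
    refine nontrivial_of_ne (EuclideanSpace.single ⟨0, hn⟩ (1:ℝ)) 0 ?_
    intro h; simpa using congrArg (fun v : EuclideanSpace ℝ (Fin n) => v ⟨0, hn⟩) h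
  simpa [finrank_euclideanSpace_fin] using
    MeasureTheory.Measure.addHaar_ball (volume : Measure (EuclideanSpace ℝ (Fin n))) 0 hr

lemma ballRearrange_eq_ball (n : ℕ) (hn : 0 < n) (A : Set (EuclideanSpace ℝ (Fin n)))
    (h0 : volume A ≠ 0) (htop : volume A ≠ ⊤) :
    ∃ R : ℝ, 0 < R ∧ ballRearrange n A = Metric.ball 0 R ∧
      volume (Metric.ball (0 : EuclideanSpace ℝ (Fin n)) R) = volume A := by
  set c := volume (Metric.ball (0 : EuclideanSpace ℝ (Fin n)) 1) with hc
  have hc0 : c ≠ 0 := (Metric.measure_ball_pos _ _ one_pos).ne'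
  have hcT : c ≠ ⊤ := measure_ball_lt_top.ne
  set d := (volume A / c).toReal with hd
  have hdc0 : volume A / c ≠ 0 := by
    simp [ENNReal.div_eq_zero_iff, h0, hcT]
  have hdcT : volume A / c ≠ ⊤ := by
    simp [ENNReal.div_eq_top, h0, hcT, htop, hc0]
  have hd0 : 0 < d := ENNReal.toReal_pos hdc0 hdcT
  set R := d ^ ((n : ℝ)⁻¹) with hR
  have hR0 : 0 < R := Real.rpow_pos_of_pos hd0 _
  have hRn : R ^ n = d := by
    rw [hR, ← Real.rpow_natCast (d ^ ((n:ℝ)⁻¹)) n, ← Real.rpow_mul hd0.le]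
    rw [inv_mul_cancel₀ (by exact_mod_cast hn.ne' : (n:ℝ) ≠ 0), Real.rpow_one]
  have hofd : ENNReal.ofReal d = volume A / c := ENNReal.ofReal_toReal hdcT
  refine ⟨R, hR0, ?_, ?_⟩
  · ext x
    simp only [ballRearrange, mem_setOf_eq, Metric.mem_ball, dist_zero_right]
    rw [vol_ball_eq n hn (norm_nonneg x)]
    rw [← hc, ← ENNReal.lt_div_iff_mul_lt (Or.inl hc0) (Or.inl hcT),
      ENNReal.ofReal_lt_iff_lt_toReal (pow_nonneg (norm_nonneg x) n) hdcT, ← hd, ← hRn]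
    exact pow_lt_pow_iff_left₀ (norm_nonneg x) hR0.le hn.ne'
  · rw [vol_ball_eq n hn hR0.le, hRn, hofd, ← hc,
      ENNReal.div_mul_cancel hc0 hcT]

lemma ballRearrange_empty_of_null (n : ℕ) (A : Set (EuclideanSpace ℝ (Fin n)))
    (h0 : volume A = 0) : ballRearrange n A = ∅ := by
  ext x; simp [ballRearrange, h0]

lemma key_set (n : ℕ) (hn : 0 < n) (A : Set (EuclideanSpace ℝ (Fin n)))
    (hA : MeasurableSet A) (htop : volume A ≠ ⊤) :
    ∫⁻ x in ballRearrange n A, ENNReal.ofReal (‖x‖ ^ 2) ≤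
      ∫⁻ x in A, ENNReal.ofReal (‖x‖ ^ 2) := by
  by_cases h0 : volume A = 0
  · rw [ballRearrange_empty_of_null n A h0]
    simp
  obtain ⟨R, hR0, hBR, hvol⟩ := ballRearrange_eq_ball n hn A h0 htop
  set B := Metric.ball (0 : EuclideanSpace ℝ (Fin n)) R with hB
  rw [hBR]
  set w : EuclideanSpace ℝ (Fin n) → ℝ≥0∞ := fun x => ENNReal.ofReal (‖x‖ ^ 2) with hw
  have hBmeas : MeasurableSet B := Metric.isOpen_ball.measurableSet
  have hBtop : volume B ≠ ⊤ := by rw [hB, hvol]; exact htop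
  -- equality of the symmetric-difference volumes
  have h1 : volume (B \ A) + volume (B ∩ A) = volume B := measure_diff_add_inter B hA
  have h2 : volume (A \ B) + volume (A ∩ B) = volume A := measure_diff_add_inter A hBmeas
  have hinterT : volume (A ∩ B) ≠ ⊤ :=
    ((measure_mono Set.inter_subset_left).trans_lt htop.lt_top).ne
  have hdiffeq : volume (B \ A) = volume (A \ B) := by
    have h3 : volume (B \ A) + volume (A ∩ B) = volume (A \ B) + volume (A ∩ B) := by
      rw [Set.inter_comm A B] at h2 ⊢
      rw [h1, hB, hvol, ← h2, Set.inter_comm B A]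
    exact (ENNReal.add_left_inj hinterT).1 h3
  -- pointwise bounds
  have hub : ∀ x ∈ B \ A, w x ≤ ENNReal.ofReal (R ^ 2) := by
    intro x hx
    have : ‖x‖ < R := by simpa [hB, Metric.mem_ball, dist_zero_right] using hx.1
    exact ENNReal.ofReal_le_ofReal (by
      have := pow_le_pow_left₀ (norm_nonneg x) this.le 2
      simpa using this)
  have hlb : ∀ x ∈ A \ B, ENNReal.ofReal (R ^ 2) ≤ w x := by
    intro x hx
    have : R ≤ ‖x‖ := by
      by_contra h
      exact hx.2 (by simpa [hB, Metric.mem_ball, dist_zero_right] using lt_of_not_ge h)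
    exact ENNReal.ofReal_le_ofReal (pow_le_pow_left₀ hR0.le this 2)
  have hsplit : ∀ (S T : Set (EuclideanSpace ℝ (Fin n))), MeasurableSet S → MeasurableSet T →
      ∫⁻ x in S, w x = (∫⁻ x in S ∩ T, w x) + ∫⁻ x in S \ T, w x := by
    intro S T hS hT
    conv_lhs => rw [← Set.inter_union_diff S T]
    exact lintegral_union (hS.diff hT) Set.disjoint_sdiff_inter.symm
  calc ∫⁻ x in B, w x = (∫⁻ x in B ∩ A, w x) + ∫⁻ x in B \ A, w x := hsplit B A hBmeas hA
    _ ≤ (∫⁻ x in A ∩ B, w x) + ENNReal.ofReal (R ^ 2) * volume (B \ A) := by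
        rw [Set.inter_comm B A]
        refine add_le_add le_rfl ?_
        calc ∫⁻ x in B \ A, w x ≤ ∫⁻ x in B \ A, ENNReal.ofReal (R ^ 2) :=
              setLIntegral_mono measurable_const hub
          _ = ENNReal.ofReal (R ^ 2) * volume (B \ A) := by
              rw [setLIntegral_const]
    _ = (∫⁻ x in A ∩ B, w x) + ENNReal.ofReal (R ^ 2) * volume (A \ B) := by rw [hdiffeq]
    _ ≤ (∫⁻ x in A ∩ B, w x) + ∫⁻ x in A \ B, w x := by
        refine add_le_add le_rfl ?_
        calc ENNReal.ofReal (R ^ 2) * volume (A \ B)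
            = ∫⁻ x in A \ B, ENNReal.ofReal (R ^ 2) := (setLIntegral_const _ _).symm
          _ ≤ ∫⁻ x in A \ B, w x := setLIntegral_mono
              ((measurable_norm.pow_const 2).ennreal_ofReal) hlb
    _ = ∫⁻ x in A, w x := (hsplit A B hA hBmeas).symm

lemma layer_pt (a : ℝ≥0∞) :
    (∫⁻ t in Ioi (0:ℝ), Set.indicator {t : ℝ | ENNReal.ofReal t < a} (fun _ => (1:ℝ≥0∞)) t) = a := by
  have hS : MeasurableSet {t : ℝ | ENNReal.ofReal t < a} :=
    measurableSet_lt ENNReal.measurable_ofReal measurable_const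
  rw [lintegral_indicator hS, setLIntegral_one, Measure.restrict_apply hS]
  rcases eq_or_ne a ⊤ with rfl | ha
  · have h : {t : ℝ | ENNReal.ofReal t < ⊤} = univ := by
      ext t; simp [ENNReal.ofReal_lt_top]
    rw [h, univ_inter, Real.volume_Ioi]
  · have h : {t : ℝ | ENNReal.ofReal t < a} ∩ Ioi 0 = Ioo 0 a.toReal := by
      ext t
      simp only [mem_inter_iff, mem_setOf_eq, mem_Ioi, mem_Ioo]
      constructor
      · rintro ⟨h1, h2⟩
        exact ⟨h2, (ENNReal.ofReal_lt_iff_lt_toReal h2.le ha).1 h1⟩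
      · rintro ⟨h1, h2⟩
        exact ⟨(ENNReal.ofReal_lt_iff_lt_toReal h1.le ha).2 h2, h1⟩
    rw [h, Real.volume_Ioo, sub_zero, ENNReal.ofReal_toReal ha]

lemma core_ineq (n : ℕ) (hn : 0 < n) (f : EuclideanSpace ℝ (Fin n) → ℝ≥0∞)
    (hf : Measurable f) (hfin : (∫⁻ x, f x) ≠ ⊤) :
    ∫⁻ x, symmRearr n f x * ENNReal.ofReal (‖x‖ ^ 2) ≤
      ∫⁻ x, f x * ENNReal.ofReal (‖x‖ ^ 2) := by
  set w : EuclideanSpace ℝ (Fin n) → ℝ≥0∞ := fun x => ENNReal.ofReal (‖x‖ ^ 2) with hw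
  have hwm : Measurable w := (measurable_norm.pow_const 2).ennreal_ofReal
  have hwT : ∀ x, w x ≠ ⊤ := fun x => ENNReal.ofReal_ne_top
  set A : ℝ → Set (EuclideanSpace ℝ (Fin n)) := fun t => {x | ENNReal.ofReal t < f x} with hA
  have hAmeas : ∀ t, MeasurableSet (A t) := fun t => measurableSet_lt measurable_const hf
  set L : ℝ → ℝ≥0∞ := fun t => volume (A t) with hL
  have hLanti : Antitone L := fun s t hst => measure_mono (fun x hx =>
    lt_of_le_of_lt (ENNReal.ofReal_le_ofReal hst) hx)
  have hLfin : ∀ t, 0 < t → L t ≠ ⊤ := by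
    intro t ht hT
    apply hfin
    have hne : ENNReal.ofReal t ≠ 0 := by
      simp [ENNReal.ofReal_eq_zero, not_le, ht]
    have h2 : (⊤:ℝ≥0∞) ≤ volume {x | ENNReal.ofReal t ≤ f x} := by
      rw [← hT]; exact measure_mono fun x hx => show ENNReal.ofReal t ≤ f x from le_of_lt hx
    have h3 := mul_meas_ge_le_lintegral₀ (μ := volume) hf.aemeasurable (ENNReal.ofReal t)
    rw [top_le_iff.1 h2, ENNReal.mul_top hne] at h3
    exact top_le_iff.1 h3
  have hvb : Measurable (fun x : EuclideanSpace ℝ (Fin n) =>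
      volume (Metric.ball (0 : EuclideanSpace ℝ (Fin n)) ‖x‖)) :=
    (Monotone.measurable (fun s t hst => measure_mono (Metric.ball_subset_ball hst))).comp
      measurable_norm
  have hBmeas : ∀ t, MeasurableSet (ballRearrange n (A t)) := fun t =>
    measurableSet_lt hvb measurable_const
  -- LHS chain
  have lhs_eq : ∫⁻ x, symmRearr n f x * w x
      = ∫⁻ t in Ioi (0:ℝ), ∫⁻ x in ballRearrange n (A t), w x := by
    have step1 : ∫⁻ x, symmRearr n f x * w x
        = ∫⁻ x, ∫⁻ t in Ioi (0:ℝ),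
            (ballRearrange n (A t)).indicator (1 : EuclideanSpace ℝ (Fin n) → ℝ≥0∞) x * w x := by
      refine lintegral_congr fun x => ?_
      rw [symmRearr, lintegral_mul_const' (w x) _ (hwT x)]
    have hm : Measurable (fun p : (EuclideanSpace ℝ (Fin n)) × ℝ =>
        (ballRearrange n (A p.2)).indicator (1 : EuclideanSpace ℝ (Fin n) → ℝ≥0∞) p.1 * w p.1) := by
      have heq : (fun p : (EuclideanSpace ℝ (Fin n)) × ℝ =>
          (ballRearrange n (A p.2)).indicator (1 : EuclideanSpace ℝ (Fin n) → ℝ≥0∞) p.1)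
          = fun p => if volume (Metric.ball (0 : EuclideanSpace ℝ (Fin n)) ‖p.1‖) < L p.2
              then 1 else 0 := by
        ext p
        simp [ballRearrange, Set.indicator_apply, hL]
      have hset : MeasurableSet {p : (EuclideanSpace ℝ (Fin n)) × ℝ |
          volume (Metric.ball (0 : EuclideanSpace ℝ (Fin n)) ‖p.1‖) < L p.2} :=
        measurableSet_lt (hvb.comp measurable_fst) (hLanti.measurable.comp measurable_snd)
      refine Measurable.mul ?_ (hwm.comp measurable_fst)
      rw [heq]
      exact Measurable.ite hset measurable_const measurable_const
    have step2 : ∫⁻ x, ∫⁻ t in Ioi (0:ℝ), (ballRearrange n (A t)).indicator (1 : EuclideanSpace ℝ (Fin n) → ℝ≥0∞) x * w x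
        = ∫⁻ t in Ioi (0:ℝ), ∫⁻ x, (ballRearrange n (A t)).indicator (1 : EuclideanSpace ℝ (Fin n) → ℝ≥0∞) x * w x :=
      lintegral_lintegral_swap hm.aemeasurable
    have step3 : ∀ t : ℝ, (∫⁻ x, (ballRearrange n (A t)).indicator (1 : EuclideanSpace ℝ (Fin n) → ℝ≥0∞) x * w x)
        = ∫⁻ x in ballRearrange n (A t), w x := by
      intro t
      rw [← lintegral_indicator (hBmeas t)]
      refine lintegral_congr fun x => ?_
      by_cases h : x ∈ ballRearrange n (A t) <;> simp [Set.indicator_apply, h]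
    rw [step1, step2]
    exact lintegral_congr fun t => step3 t
  -- RHS chain
  have rhs_eq : ∫⁻ x, f x * w x
      = ∫⁻ t in Ioi (0:ℝ), ∫⁻ x in A t, w x := by
    have step1 : ∫⁻ x, f x * w x
        = ∫⁻ x, ∫⁻ t in Ioi (0:ℝ), (A t).indicator (1 : EuclideanSpace ℝ (Fin n) → ℝ≥0∞) x * w x := by
      refine lintegral_congr fun x => ?_
      rw [lintegral_mul_const' (w x) _ (hwT x)]
      congr 1
      rw [← layer_pt (f x)]
      refine setLIntegral_congr_fun measurableSet_Ioi (fun t _ => ?_)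
      by_cases h : ENNReal.ofReal t < f x <;>
        simp [Set.indicator_apply, hA, h]
    have hm : Measurable (fun p : (EuclideanSpace ℝ (Fin n)) × ℝ =>
        (A p.2).indicator (1 : EuclideanSpace ℝ (Fin n) → ℝ≥0∞) p.1 * w p.1) := by
      have heq : (fun p : (EuclideanSpace ℝ (Fin n)) × ℝ =>
          (A p.2).indicator (1 : EuclideanSpace ℝ (Fin n) → ℝ≥0∞) p.1)
          = fun p => if ENNReal.ofReal p.2 < f p.1 then 1 else 0 := by
        ext p
        simp [hA, Set.indicator_apply]
      have hset : MeasurableSet {p : (EuclideanSpace ℝ (Fin n)) × ℝ |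
          ENNReal.ofReal p.2 < f p.1} :=
        measurableSet_lt (ENNReal.measurable_ofReal.comp measurable_snd)
          (hf.comp measurable_fst)
      refine Measurable.mul ?_ (hwm.comp measurable_fst)
      rw [heq]
      exact Measurable.ite hset measurable_const measurable_const
    have step2 : ∫⁻ x, ∫⁻ t in Ioi (0:ℝ), (A t).indicator (1 : EuclideanSpace ℝ (Fin n) → ℝ≥0∞) x * w x
        = ∫⁻ t in Ioi (0:ℝ), ∫⁻ x, (A t).indicator (1 : EuclideanSpace ℝ (Fin n) → ℝ≥0∞) x * w x :=
      lintegral_lintegral_swap hm.aemeasurable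
    have step3 : ∀ t : ℝ, (∫⁻ x, (A t).indicator (1 : EuclideanSpace ℝ (Fin n) → ℝ≥0∞) x * w x) = ∫⁻ x in A t, w x := by
      intro t
      rw [← lintegral_indicator (hAmeas t)]
      refine lintegral_congr fun x => ?_
      by_cases h : x ∈ A t <;> simp [Set.indicator_apply, h]
    rw [step1, step2]
    exact lintegral_congr fun t => step3 t
  rw [lhs_eq, rhs_eq]
  refine lintegral_mono_ae ((ae_restrict_iff' measurableSet_Ioi).2 (ae_of_all _ fun t ht => ?_))
  exact key_set n hn (A t) (hAmeas t) (hLfin t ht)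


/-- For a random vector `X` on `ℝⁿ` with density `f` and finite second moment,
`E‖X*‖² ≤ E‖X − E[X]‖²`, i.e. `tr Cov(X*) ≤ tr Cov(X)`, where `X*` has density
the spherically symmetric decreasing rearrangement `f*`. -/
theorem secondMoment_symmRearr (n : ℕ) (f : EuclideanSpace ℝ (Fin n) → ℝ≥0∞)
    (hf : IsDensity n f) (hmom : (∫⁻ x, f x * ENNReal.ofReal (‖x‖ ^ 2)) ≠ ⊤) :
    ∫⁻ x, symmRearr n f x * ENNReal.ofReal (‖x‖ ^ 2) ≤
      ∫⁻ x, f x * ENNReal.ofReal (‖x - (∫ y, (f y).toReal • y)‖ ^ 2) := by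
  rcases Nat.eq_zero_or_pos n with rfl | hn
  · have hx : ∀ x : EuclideanSpace ℝ (Fin 0), ‖x‖ = 0 := fun x => by
      rw [Subsingleton.elim x 0, norm_zero]
    have h0 : ∫⁻ x, symmRearr 0 f x * ENNReal.ofReal (‖x‖ ^ 2) = 0 := by
      simp [hx]
    rw [h0]; exact bot_le
  · set c := ∫ y, (f y).toReal • y with hc
    set g : EuclideanSpace ℝ (Fin n) → ℝ≥0∞ := fun x => f (x + c) with hg
    have hgm : Measurable g := hf.1.comp (measurable_add_const c)
    have hmp : MeasurePreserving (fun x : EuclideanSpace ℝ (Fin n) => x + c) volume volume :=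
      measurePreserving_add_right volume c
    have hlevel : ∀ t : ℝ, volume {x | ENNReal.ofReal t < g x}
        = volume {x | ENNReal.ofReal t < f x} := by
      intro t
      have h : {x | ENNReal.ofReal t < g x}
          = (fun x => x + c) ⁻¹' {x | ENNReal.ofReal t < f x} := rfl
      rw [h, measure_preimage_add_right]
    have hsym : symmRearr n g = symmRearr n f := by
      funext y
      unfold symmRearr
      refine lintegral_congr fun t => ?_
      have h : ballRearrange n {x | ENNReal.ofReal t < g x}
          = ballRearrange n {x | ENNReal.ofReal t < f x} := by
        unfold ballRearrange; rw [hlevel t]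
      rw [h]
    have hgint : ∫⁻ x, g x = 1 := by
      rw [← hf.2]
      exact hmp.lintegral_comp hf.1
    have hrhs : ∫⁻ x, g x * ENNReal.ofReal (‖x‖ ^ 2)
        = ∫⁻ x, f x * ENNReal.ofReal (‖x - c‖ ^ 2) := by
      have h := hmp.lintegral_comp (f := fun y => f y * ENNReal.ofReal (‖y - c‖ ^ 2))
        (hf.1.mul ((measurable_id.sub_const c).norm.pow_const 2).ennreal_ofReal)
      rw [← h]
      refine lintegral_congr fun x => ?_
      simp [hg, add_sub_cancel_right]
    calc ∫⁻ x, symmRearr n f x * ENNReal.ofReal (‖x‖ ^ 2)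
        = ∫⁻ x, symmRearr n g x * ENNReal.ofReal (‖x‖ ^ 2) := by rw [hsym]
      _ ≤ ∫⁻ x, g x * ENNReal.ofReal (‖x‖ ^ 2) :=
          core_ineq n hn g hgm (by rw [hgint]; exact one_ne_top)
      _ = _ := hrhs
end
end

section
/- Let X and Y be independent uniform random variables on Borel subsets M_1, M_2 of the real line with 0 < |M_1| < |M_2| < ∞. Then h(X + Y) ≥ log|M_2| + |M_1|/(2|M_2|) ≥ log(|M_2| + |M_1|/2). -/
open MeasureTheory Set Filter ENNReal

noncomputable section

/-- Convolution of two `ℝ≥0∞`-valued functions on `ℝ`. -/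
def conv2R (f g : ℝ → ℝ≥0∞) : ℝ → ℝ≥0∞ :=
  fun x => ∫⁻ y, f y * g (x - y)

/-- The Shannon differential entropy `h(f) = -∫ f log f` of a density on `ℝ`,
as an extended real number. -/
def entropyR (f : ℝ → ℝ≥0∞) : EReal :=
  ((∫⁻ x, ENNReal.ofReal (-((f x).toReal * Real.log (f x).toReal))) : EReal) -
    ((∫⁻ x, ENNReal.ofReal ((f x).toReal * Real.log (f x).toReal)) : EReal)

/-- The uniform density on a set `M ⊆ ℝ`. -/
def unifDens (M : Set ℝ) : ℝ → ℝ≥0∞ :=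
  fun x => (volume M)⁻¹ * M.indicator 1 x

namespace EntropyAux



lemma lem_log2 {a b : ℝ} (ha : 0 < a) (hb : 0 < b) :
    Real.log (b + a / 2) ≤ Real.log b + a / (2 * b) := by
  have h1 : b + a / 2 = b * (1 + a / (2 * b)) := by field_simp
  have h2 : 0 < 1 + a / (2 * b) := by positivity
  rw [h1, Real.log_mul (ne_of_gt hb) (ne_of_gt h2)]
  have := Real.log_le_sub_one_of_pos h2
  linarith

lemma my_integral_mul_log {a : ℝ} (ha : 0 ≤ a) :
    ∫ s in (0:ℝ)..a, s * Real.log s = a^2/2 * Real.log a - a^2/4 := by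
  have hΨ : ∀ s : ℝ, (s^2/2 * Real.log s - s^2/4) = (s * Real.log s) * s / 2 - s^2/4 := by
    intro s; ring
  rw [intervalIntegral.integral_eq_sub_of_hasDerivAt_of_le ha
    (f := fun s => (s * Real.log s) * s / 2 - s^2/4) ?_ ?_ ?_]
  · rw [← hΨ a, ← hΨ 0]; simp [Real.log_zero]
  · exact (((Real.continuous_mul_log.mul continuous_id).div_const 2).sub
      ((continuous_pow 2).div_const 4)).continuousOn
  · intro s hs
    have hs0 : s ≠ 0 := ne_of_gt hs.1
    have h1 : HasDerivAt (fun s : ℝ => (s * Real.log s) * s / 2 - s^2/4) (s * Real.log s) s := by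
      have hlog : HasDerivAt (fun s : ℝ => s * Real.log s) (Real.log s + 1) s :=
        Real.hasDerivAt_mul_log hs0
      have h2 : HasDerivAt (fun s : ℝ => (s * Real.log s) * s) ((Real.log s + 1) * s + (s * Real.log s) * 1) s :=
        hlog.mul (hasDerivAt_id s)
      have h3 : HasDerivAt (fun s : ℝ => s^2) (2 * s) s := by
        simpa using (hasDerivAt_pow 2 s)
      have : HasDerivAt (fun s : ℝ => (s * Real.log s) * s / 2 - s^2/4) _ s := (h2.div_const 2).sub (h3.div_const 4)
      convert this using 1; ring
    exact h1
  · exact (Real.continuous_mul_log).intervalIntegrable 0 a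

lemma lem_core {a c : ℝ} (hc : 0 < c) (hca : c ≤ a) :
    ∫ u in c..a, Real.log (a / u) = c * Real.log c - c * Real.log a + (a - c) := by
  have ha : 0 < a := lt_of_lt_of_le hc hca
  have hcongr : ∀ u ∈ uIcc c a, Real.log (a / u) = Real.log a - Real.log u := by
    intro u hu
    rw [uIcc_of_le hca] at hu
    exact Real.log_div (ne_of_gt ha) (ne_of_gt (lt_of_lt_of_le hc hu.1))
  rw [intervalIntegral.integral_congr hcongr]
  have hint : IntervalIntegrable Real.log volume c a := by
    apply ContinuousOn.intervalIntegrable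
    apply Real.continuousOn_log.mono
    intro u hu; rw [uIcc_of_le hca] at hu
    exact ne_of_gt (lt_of_lt_of_le hc hu.1)
  rw [intervalIntegral.integral_sub (intervalIntegrable_const) hint]
  rw [intervalIntegral.integral_const, integral_log]
  simp only [smul_eq_mul]; ring

lemma outer1 {a : ℝ} (ha : 0 < a) :
    ∫ s in (0:ℝ)..a, (s * Real.log s - s * Real.log a + (a - s)) = a^2/4 := by
  have h1 : IntervalIntegrable (fun s : ℝ => s * Real.log s) volume 0 a :=
    Real.continuous_mul_log.intervalIntegrable 0 a
  have h2 : IntervalIntegrable (fun s : ℝ => s * Real.log a) volume 0 a :=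
    (continuous_id.mul continuous_const).intervalIntegrable 0 a
  have h3 : IntervalIntegrable (fun s : ℝ => a - s) volume 0 a :=
    (continuous_const.sub continuous_id).intervalIntegrable 0 a
  rw [intervalIntegral.integral_add (h1.sub h2) h3, intervalIntegral.integral_sub h1 h2]
  rw [my_integral_mul_log (le_of_lt ha)]
  rw [intervalIntegral.integral_mul_const, integral_id]
  have h4 : (∫ x in (0:ℝ)..a, (a - x)) = a^2/2 := by
    simp only [smul_eq_mul, integral_id, sub_zero,
      intervalIntegral.integral_sub intervalIntegrable_const
        (intervalIntegral.intervalIntegrable_id (μ := volume) (a := 0) (b := a)),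
      intervalIntegral.integral_const]
    ring
  rw [h4]; ring

lemma outer2 {a : ℝ} (ha : 0 < a) :
    ∫ s in (0:ℝ)..a, ((a-s) * Real.log (a-s) - (a-s) * Real.log a + s) = a^2/4 := by
  have key : ∫ s in (0:ℝ)..a, ((a-s) * Real.log (a-s) - (a-s) * Real.log a + (a - (a-s)))
      = a^2/4 := by
    have := intervalIntegral.integral_comp_sub_left
      (fun u : ℝ => u * Real.log u - u * Real.log a + (a - u)) a (a := 0) (b := a)
    simp only [sub_zero, sub_self] at this
    rw [this, outer1 ha]
  have hss : ∀ s : ℝ, a - (a - s) = s := fun s => by ring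
  simp_rw [hss] at key
  exact key



/-- cumulative distribution of the set `A` -/
def gcdf (A : Set ℝ) (y : ℝ) : ℝ := (volume (A ∩ Iic y)).toReal

lemma gcdf_nonneg (A : Set ℝ) (y : ℝ) : 0 ≤ gcdf A y := ENNReal.toReal_nonneg

lemma volume_inter_Iic_lt_top {A : Set ℝ} (hfin : volume A ≠ ⊤) (y : ℝ) :
    volume (A ∩ Iic y) < ⊤ :=
  lt_of_le_of_lt (measure_mono inter_subset_left) (lt_top_iff_ne_top.2 hfin)

lemma ofReal_gcdf {A : Set ℝ} (hfin : volume A ≠ ⊤) (y : ℝ) :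
    ENNReal.ofReal (gcdf A y) = volume (A ∩ Iic y) :=
  ENNReal.ofReal_toReal (volume_inter_Iic_lt_top hfin y).ne

lemma gcdf_mono {A : Set ℝ} (hfin : volume A ≠ ⊤) : Monotone (gcdf A) := by
  intro y y' h
  exact ENNReal.toReal_mono (volume_inter_Iic_lt_top hfin y').ne
    (measure_mono (inter_subset_inter_right _ (Iic_subset_Iic.2 h)))

lemma gcdf_le {A : Set ℝ} (hfin : volume A ≠ ⊤) (y : ℝ) :
    gcdf A y ≤ (volume A).toReal :=
  ENNReal.toReal_mono hfin (measure_mono inter_subset_left)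

lemma gcdf_lipschitz {A : Set ℝ} (hA : MeasurableSet A) (hfin : volume A ≠ ⊤) :
    LipschitzWith 1 (gcdf A) := by
  apply LipschitzWith.of_dist_le_mul
  intro y y'
  wlog h : y' ≤ y generalizing y y'
  · rw [dist_comm, dist_comm y y']; exact this _ _ (le_of_not_ge h)
  have hsplit : A ∩ Iic y = (A ∩ Iic y') ∪ (A ∩ Ioc y' y) := by
    rw [← inter_union_distrib_left, Iic_union_Ioc_eq_Iic h]
  have hd : volume (A ∩ Iic y) ≤ volume (A ∩ Iic y') + ENNReal.ofReal (y - y') := by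
    rw [hsplit]
    refine le_trans (measure_union_le _ _) (add_le_add le_rfl ?_)
    refine le_trans (measure_mono inter_subset_right) ?_
    rw [Real.volume_Ioc]
  have h1 : gcdf A y ≤ gcdf A y' + (y - y') := by
    have ht := ENNReal.toReal_mono
      (ENNReal.add_ne_top.2 ⟨(volume_inter_Iic_lt_top hfin y').ne, ENNReal.ofReal_ne_top⟩) hd
    rw [ENNReal.toReal_add (volume_inter_Iic_lt_top hfin y').ne ENNReal.ofReal_ne_top,
      ENNReal.toReal_ofReal (sub_nonneg.2 h)] at ht
    exact ht
  have h0 : 0 ≤ gcdf A y - gcdf A y' := sub_nonneg.2 (gcdf_mono hfin h)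
  rw [Real.dist_eq, Real.dist_eq, abs_of_nonneg h0, NNReal.coe_one, one_mul]
  calc gcdf A y - gcdf A y' ≤ y - y' := by linarith
    _ ≤ |y - y'| := le_abs_self _

lemma gcdf_continuous {A : Set ℝ} (hA : MeasurableSet A) (hfin : volume A ≠ ⊤) :
    Continuous (gcdf A) := (gcdf_lipschitz hA hfin).continuous

lemma gcdf_measurable {A : Set ℝ} (hA : MeasurableSet A) (hfin : volume A ≠ ⊤) :
    Measurable (gcdf A) := (gcdf_continuous hA hfin).measurable

lemma gcdf_tendsto_atBot {A : Set ℝ} (hA : MeasurableSet A) (hfin : volume A ≠ ⊤)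
    {c : ℝ} (hc : 0 < c) : ∃ y : ℝ, gcdf A y ≤ c := by
  have h1 : Tendsto (fun n : ℕ => volume (A ∩ Iic (-(n:ℝ)))) atTop (nhds (volume (⋂ n : ℕ, A ∩ Iic (-(n:ℝ))))) := by
    apply tendsto_measure_iInter_atTop (fun n => (hA.inter measurableSet_Iic).nullMeasurableSet)
    · intro m n h
      exact inter_subset_inter_right _ (Iic_subset_Iic.2 (by simp [neg_le_neg_iff]; exact_mod_cast h))
    · exact ⟨0, (volume_inter_Iic_lt_top hfin (-(0:ℕ):ℝ)).ne⟩
  have h2 : (⋂ n : ℕ, A ∩ Iic (-(n:ℝ))) = ∅ := by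
    ext x; simp only [mem_iInter, mem_inter_iff, mem_Iic, mem_empty_iff_false, iff_false]
    intro h
    obtain ⟨n, hn⟩ := exists_nat_gt (-x)
    exact absurd ((h n).2) (by push_neg; linarith)
  rw [h2, measure_empty] at h1
  have h3 : ∀ᶠ n : ℕ in atTop, volume (A ∩ Iic (-(n:ℝ))) < ENNReal.ofReal c := by
    exact h1 (Iio_mem_nhds (ENNReal.ofReal_pos.2 hc))
  obtain ⟨n, hn⟩ := h3.exists
  exact ⟨-(n:ℝ), le_of_lt (by
    have := ENNReal.toReal_lt_toReal (volume_inter_Iic_lt_top hfin _).ne ENNReal.ofReal_ne_top |>.2 hn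
    rwa [ENNReal.toReal_ofReal hc.le] at this)⟩

lemma gcdf_tendsto_atTop {A : Set ℝ} (hA : MeasurableSet A) (hfin : volume A ≠ ⊤)
    {c : ℝ} (hc' : c < (volume A).toReal) : ∃ y : ℝ, c < gcdf A y := by
  have h1 : Tendsto (fun n : ℕ => volume (A ∩ Iic (n:ℝ))) atTop (nhds (volume (⋃ n : ℕ, A ∩ Iic (n:ℝ)))) := by
    apply tendsto_measure_iUnion_atTop
    intro m n h
    exact inter_subset_inter_right _ (Iic_subset_Iic.2 (by exact_mod_cast h))
  have h2 : (⋃ n : ℕ, A ∩ Iic (n:ℝ)) = A := by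
    ext x; simp only [mem_iUnion, mem_inter_iff, mem_Iic]
    constructor
    · rintro ⟨n, h, _⟩; exact h
    · intro h
      obtain ⟨n, hn⟩ := exists_nat_gt x
      exact ⟨n, h, hn.le⟩
  rw [h2] at h1
  rcases lt_or_ge c 0 with hc | hc
  · exact ⟨0, lt_of_lt_of_le hc (gcdf_nonneg A 0)⟩
  have h3 : ∀ᶠ n : ℕ in atTop, ENNReal.ofReal c < volume (A ∩ Iic (n:ℝ)) := by
    refine h1 (Ioi_mem_nhds ?_)
    exact (ENNReal.ofReal_lt_iff_lt_toReal hc hfin).2 hc'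
  obtain ⟨n, hn⟩ := h3.exists
  refine ⟨(n:ℝ), ?_⟩
  have := (ENNReal.ofReal_lt_iff_lt_toReal hc (volume_inter_Iic_lt_top hfin _).ne).1 hn
  exact this



lemma map_gcdf {A : Set ℝ} (hA : MeasurableSet A) (hfin : volume A ≠ ⊤) :
    Measure.map (gcdf A) (volume.restrict A)
      = volume.restrict (Ioc 0 (volume A).toReal) := by
  set aT := (volume A).toReal with haT
  haveI : IsFiniteMeasure (volume.restrict A) := by
    constructor
    rw [Measure.restrict_apply_univ]
    exact lt_top_iff_ne_top.2 hfin
  haveI : IsFiniteMeasure (Measure.map (gcdf A) (volume.restrict A)) := by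
    constructor
    rw [Measure.map_apply (gcdf_measurable hA hfin) MeasurableSet.univ]
    simp only [preimage_univ]
    rw [Measure.restrict_apply_univ]
    exact lt_top_iff_ne_top.2 hfin
  apply Measure.ext_of_Iic
  intro c
  rw [Measure.map_apply (gcdf_measurable hA hfin) measurableSet_Iic,
    Measure.restrict_apply measurableSet_Iic,
    Measure.restrict_apply ((gcdf_measurable hA hfin) measurableSet_Iic)]
  have hRHS : Iic c ∩ Ioc 0 aT = Ioc 0 (min aT c) := by
    rw [inter_comm, Ioc_inter_Iic]
  rw [hRHS, Real.volume_Ioc, sub_zero]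
  rcases lt_or_ge c 0 with hc | hc
  · have h1 : gcdf A ⁻¹' Iic c = ∅ := by
      ext y; simp only [mem_preimage, mem_Iic, mem_empty_iff_false, iff_false, not_le]
      exact lt_of_lt_of_le hc (gcdf_nonneg A y)
    rw [h1, empty_inter, measure_empty, ENNReal.ofReal_eq_zero.2]
    exact (min_le_right _ _).trans hc.le
  rcases le_or_gt aT c with hac | hac
  · have h1 : gcdf A ⁻¹' Iic c = univ := by
      ext y; simp only [mem_preimage, mem_Iic, mem_univ, iff_true]
      exact (gcdf_le hfin y).trans hac
    rw [h1, univ_inter, min_eq_left hac, ENNReal.ofReal_toReal hfin]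
  · -- 0 ≤ c < aT
    rw [min_eq_right hac.le]
    set T := gcdf A ⁻¹' Iic c with hT
    have hTclosed : IsClosed T := IsClosed.preimage (gcdf_continuous hA hfin) isClosed_Iic
    have hTbdd : BddAbove T := by
      obtain ⟨y₁, hy₁⟩ := gcdf_tendsto_atTop hA hfin hac
      refine ⟨y₁, fun t ht => ?_⟩
      by_contra hlt
      push_neg at hlt
      exact absurd ((gcdf_mono hfin hlt.le).trans ht) (not_le.2 hy₁)
    by_cases hTne : T.Nonempty
    · set s₀ := sSup T with hs₀
      have hmem : s₀ ∈ T := hTclosed.csSup_mem hTne hTbdd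
      have hle : gcdf A s₀ ≤ c := hmem
      have hTeq : T = Iic s₀ := by
        ext y
        constructor
        · intro hy; exact le_csSup hTbdd hy
        · intro hy; exact le_trans (gcdf_mono hfin hy) hle
      have hgeq : gcdf A s₀ = c := by
        rcases eq_or_lt_of_le hle with h | h
        · exact h
        · exfalso
          have hcont : ContinuousAt (gcdf A) s₀ := (gcdf_continuous hA hfin).continuousAt
          have : ∀ᶠ y in nhds s₀, gcdf A y < c := hcont.eventually_lt_const h
          obtain ⟨ε, hε, hball⟩ := Metric.eventually_nhds_iff.1 this
          have hy : s₀ + ε/2 ∈ T := le_of_lt (hball (by rw [Real.dist_eq, add_sub_cancel_left, abs_of_pos (half_pos hε)]; linarith))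
          have := le_csSup hTbdd hy
          linarith
      rw [hTeq, inter_comm]
      rw [← ofReal_gcdf hfin s₀, hgeq]
    · rw [not_nonempty_iff_eq_empty] at hTne
      rw [hTne, empty_inter, measure_empty]
      have hc0 : c = 0 := by
        by_contra hne
        have hcpos : 0 < c := lt_of_le_of_ne hc (Ne.symm hne)
        obtain ⟨y, hy⟩ := gcdf_tendsto_atBot hA hfin hcpos
        exact absurd (⟨y, hy⟩ : T.Nonempty) (by rw [hTne]; simp)
      simp [hc0]



def Kc (M₁ M₂ : Set ℝ) (x : ℝ) : ℝ≥0∞ := ∫⁻ y, M₁.indicator 1 y * M₂.indicator 1 (x - y)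

lemma ind_mul {S : Set ℝ} (g : ℝ → ℝ≥0∞) (y : ℝ) :
    S.indicator 1 y * g y = S.indicator g y := by
  by_cases h : y ∈ S <;> simp [Set.indicator_of_mem, Set.indicator_of_notMem, h]

variable {M₁ M₂ : Set ℝ}

lemma Kc_eq_volume (h₁ : MeasurableSet M₁) (h₂ : MeasurableSet M₂) (x : ℝ) :
    Kc M₁ M₂ x = volume (M₁ ∩ {w | x - w ∈ M₂}) := by
  have hpt : ∀ y, M₁.indicator (1 : ℝ → ℝ≥0∞) y * M₂.indicator (1 : ℝ → ℝ≥0∞) (x - y)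
      = (M₁ ∩ {w | x - w ∈ M₂}).indicator (1 : ℝ → ℝ≥0∞) y := by
    intro y
    by_cases h1 : y ∈ M₁ <;> by_cases h2 : x - y ∈ M₂ <;>
      simp [Set.indicator_of_mem, Set.indicator_of_notMem, h1, h2, Set.indicator_apply]
  unfold Kc
  simp_rw [hpt]
  exact lintegral_indicator_one (h₁.inter ((measurable_const.sub measurable_id) h₂))

lemma volume_preimage_sub (x : ℝ) (S : Set ℝ) (hS : MeasurableSet S) :
    volume ((fun w => x - w) ⁻¹' S) = volume S := by
  have hcomp : (fun w : ℝ => x - w) = (fun w : ℝ => x + w) ∘ Neg.neg := by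
    funext w; simp [sub_eq_add_neg]
  rw [hcomp, Set.preimage_comp]
  rw [Measure.measure_preimage_neg]
  exact measure_preimage_add volume x S

lemma measurable_Kc (h₁ : MeasurableSet M₁) (h₂ : MeasurableSet M₂) :
    Measurable (Kc M₁ M₂) := by
  apply Measurable.lintegral_prod_right' (f := fun p : ℝ × ℝ => M₁.indicator 1 p.2 * M₂.indicator 1 (p.1 - p.2))
  apply Measurable.mul
  · exact (measurable_indicator_const_iff 1 |>.2 h₁).comp measurable_snd
  · exact (measurable_indicator_const_iff 1 |>.2 h₂).comp (measurable_fst.sub measurable_snd)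



variable {M₁ M₂ : Set ℝ}

lemma Kc_le_left (h₁ : MeasurableSet M₁) (h₂ : MeasurableSet M₂) (x : ℝ) :
    Kc M₁ M₂ x ≤ volume M₁ := by
  rw [Kc_eq_volume h₁ h₂]
  exact measure_mono inter_subset_left

lemma Kc_le_right (h₁ : MeasurableSet M₁) (h₂ : MeasurableSet M₂) (x : ℝ) :
    Kc M₁ M₂ x ≤ volume M₂ := by
  rw [Kc_eq_volume h₁ h₂]
  refine le_trans (measure_mono inter_subset_right) ?_
  rw [show {w : ℝ | x - w ∈ M₂} = (fun w => x - w) ⁻¹' M₂ from rfl]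
  rw [volume_preimage_sub x M₂ h₂]

lemma Kc_lower_bound_left (h₁ : MeasurableSet M₁) (h₂ : MeasurableSet M₂) (y z : ℝ) :
    Kc M₁ M₂ (y + z) ≤ volume (M₁ ∩ Iic y) + volume (M₂ ∩ Iic z) := by
  rw [Kc_eq_volume h₁ h₂]
  have hsub : M₁ ∩ {w | y + z - w ∈ M₂} ⊆
      (M₁ ∩ Iic y) ∪ ((fun w => y + z - w) ⁻¹' (M₂ ∩ Iic z)) := by
    rintro w ⟨hw1, hw2⟩
    rcases le_or_gt w y with h | h
    · exact Or.inl ⟨hw1, h⟩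
    · refine Or.inr ⟨hw2, ?_⟩
      simp only [mem_Iic]; linarith
  refine le_trans (measure_mono hsub) (le_trans (measure_union_le _ _) ?_)
  refine add_le_add le_rfl ?_
  rw [volume_preimage_sub (y+z) _ (h₂.inter measurableSet_Iic)]

lemma Kc_upper_bound_left (h₁ : MeasurableSet M₁) (h₂ : MeasurableSet M₂) (y z : ℝ) :
    Kc M₁ M₂ (y + z) ≤ volume (M₁ ∩ Ici y) + volume (M₂ ∩ Ici z) := by
  rw [Kc_eq_volume h₁ h₂]
  have hsub : M₁ ∩ {w | y + z - w ∈ M₂} ⊆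
      (M₁ ∩ Ici y) ∪ ((fun w => y + z - w) ⁻¹' (M₂ ∩ Ici z)) := by
    rintro w ⟨hw1, hw2⟩
    rcases le_or_gt y w with h | h
    · exact Or.inl ⟨hw1, h⟩
    · refine Or.inr ⟨hw2, ?_⟩
      simp only [mem_Ici]; linarith
  refine le_trans (measure_mono hsub) (le_trans (measure_union_le _ _) ?_)
  refine add_le_add le_rfl ?_
  rw [volume_preimage_sub (y+z) _ (h₂.inter measurableSet_Ici)]

lemma volume_inter_Ici {A : Set ℝ} (hA : MeasurableSet A) (hfin : volume A ≠ ⊤) (y : ℝ) :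
    (volume (A ∩ Ici y)).toReal = (volume A).toReal - gcdf A y := by
  have h1 : volume (A ∩ Iic y) + volume (A ∩ Ioi y) = volume A := by
    rw [← measure_union ?_ (hA.inter measurableSet_Ioi)]
    · rw [← inter_union_distrib_left, Iic_union_Ioi, inter_univ]
    · refine Disjoint.mono inter_subset_right inter_subset_right ?_
      rw [disjoint_left]
      intro w hw hw'
      exact absurd (mem_Iic.1 hw) (not_le.2 hw')
  have h2 : volume (A ∩ Ici y) = volume (A ∩ Ioi y) := by
    apply le_antisymm
    · have : A ∩ Ici y ⊆ (A ∩ Ioi y) ∪ {y} := by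
        rintro w ⟨hw1, hw2⟩
        rcases eq_or_lt_of_le (mem_Ici.1 hw2) with h | h
        · exact Or.inr (by simp [h.symm])
        · exact Or.inl ⟨hw1, h⟩
      refine le_trans (measure_mono this) (le_trans (measure_union_le _ _) ?_)
      simp [Real.volume_singleton]
    · exact measure_mono (inter_subset_inter_right _ Ioi_subset_Ici_self)
  rw [h2]
  have h3 : volume (A ∩ Ioi y) = volume A - volume (A ∩ Iic y) :=
    ENNReal.eq_sub_of_add_eq (volume_inter_Iic_lt_top hfin y).ne
      (by rw [add_comm]; exact h1)
  rw [h3, ENNReal.toReal_sub_of_le ?_ hfin]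
  · rfl
  · rw [← h1]; exact le_add_right le_rfl


lemma ind_ne_top {S : Set ℝ} (y : ℝ) : S.indicator (1 : ℝ → ℝ≥0∞) y ≠ ⊤ := by
  by_cases h : y ∈ S <;> simp [Set.indicator_of_mem, Set.indicator_of_notMem, h]

variable {M₁ M₂ : Set ℝ}

lemma lemA (h₁ : MeasurableSet M₁) (h₂ : MeasurableSet M₂)
    (h : ℝ → ℝ≥0∞) (hmeas : Measurable h) (htop : ∀ x, h x ≠ ⊤) :
    ∫⁻ x, Kc M₁ M₂ x * h x
      = ∫⁻ p : ℝ × ℝ, h (p.1 + p.2) ∂((volume.restrict M₁).prod (volume.restrict M₂)) := by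
  have hind₁ : Measurable (M₁.indicator (1 : ℝ → ℝ≥0∞)) := measurable_one.indicator h₁
  have hind₂ : Measurable (M₂.indicator (1 : ℝ → ℝ≥0∞)) := measurable_one.indicator h₂
  have hF : Measurable (Function.uncurry (fun x y : ℝ =>
      (M₁.indicator 1 y * M₂.indicator 1 (x - y)) * h x)) := by
    apply Measurable.mul
    · exact (hind₁.comp measurable_snd).mul (hind₂.comp (measurable_fst.sub measurable_snd))
    · exact hmeas.comp measurable_fst
  calc ∫⁻ x, Kc M₁ M₂ x * h x
      = ∫⁻ x, ∫⁻ y, (M₁.indicator 1 y * M₂.indicator 1 (x - y)) * h x := by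
        refine lintegral_congr fun x => ?_
        exact (lintegral_mul_const' (h x) _ (htop x)).symm
    _ = ∫⁻ y, ∫⁻ x, (M₁.indicator 1 y * M₂.indicator 1 (x - y)) * h x := by
        exact lintegral_lintegral_swap hF.aemeasurable
    _ = ∫⁻ y, M₁.indicator 1 y * ∫⁻ x, M₂.indicator 1 (x - y) * h x := by
        refine lintegral_congr fun y => ?_
        simp_rw [mul_assoc]
        exact lintegral_const_mul' _ _ (ind_ne_top y)
    _ = ∫⁻ y, M₁.indicator 1 y * ∫⁻ z, M₂.indicator 1 z * h (z + y) := by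
        refine lintegral_congr fun y => ?_
        congr 1
        have := lintegral_add_right_eq_self (μ := volume) (fun x => M₂.indicator (1:ℝ→ℝ≥0∞) (x - y) * h x) y
        rw [← this]
        simp [add_sub_cancel_right]
    _ = ∫⁻ y in M₁, ∫⁻ z in M₂, h (y + z) := by
        rw [← lintegral_indicator h₁]
        refine lintegral_congr fun y => ?_
        have hin : (∫⁻ z, M₂.indicator 1 z * h (z + y)) = ∫⁻ z in M₂, h (y + z) := by
          rw [← lintegral_indicator h₂]
          refine lintegral_congr fun z => ?_
          by_cases hz : z ∈ M₂ <;> simp [hz, add_comm]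
        rw [hin]
        by_cases hy : y ∈ M₁ <;> simp [hy]
    _ = ∫⁻ p : ℝ × ℝ, h (p.1 + p.2) ∂((volume.restrict M₁).prod (volume.restrict M₂)) := by
        exact (lintegral_prod _ ((hmeas.comp measurable_add).aemeasurable)).symm

def Hfun (a b s t : ℝ) : ℝ≥0∞ :=
  ENNReal.ofReal (Real.log (a / min (min (s+t) ((a-s)+(b-t))) a))

def H1fun (a s t : ℝ) : ℝ≥0∞ :=
  if s + t < a then ENNReal.ofReal (Real.log (a / (s+t))) else 0

def H2fun (a b s t : ℝ) : ℝ≥0∞ :=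
  if (a-s) + (b-t) < a then ENNReal.ofReal (Real.log (a / ((a-s)+(b-t)))) else 0

lemma Hsplit {a b : ℝ} (hab : a ≤ b) {s t : ℝ}
    (hs : s ∈ Ioc 0 a) (ht : t ∈ Ioc 0 b) :
    H1fun a s t + H2fun a b s t ≤ Hfun a b s t := by
  unfold Hfun H1fun H2fun
  rcases lt_or_ge (s + t) a with h | h
  · rw [if_pos h, if_neg (by push_neg; nlinarith [hs.1, ht.1, hs.2, ht.2])]
    rw [add_zero]
    have h1 : s + t ≤ (a-s)+(b-t) := by linarith
    rw [min_eq_left h1, min_eq_left h.le]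
  · rw [if_neg (not_lt.2 h), zero_add]
    rcases lt_or_ge ((a-s)+(b-t)) a with h2 | h2
    · rw [if_pos h2]
      have hmin : min (min (s+t) ((a-s)+(b-t))) a = (a-s)+(b-t) := by
        have hin : min (s+t) ((a-s)+(b-t)) = (a-s)+(b-t) := min_eq_right (by linarith)
        rw [hin, min_eq_left h2.le]
      rw [hmin]
    · rw [if_neg (not_lt.2 h2)]
      exact zero_le

lemma inner1 {a b : ℝ} (ha : 0 < a) (hab : a ≤ b) {s : ℝ} (hs : s ∈ Ioc 0 a) :
    ∫⁻ t in Ioc 0 b, H1fun a s t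
      = ENNReal.ofReal (s * Real.log s - s * Real.log a + (a - s)) := by
  have hind : ∀ t : ℝ, H1fun a s t
      = (Iio (a - s)).indicator (fun t => ENNReal.ofReal (Real.log (a / (s+t)))) t := by
    intro t
    unfold H1fun
    by_cases h : t < a - s
    · rw [if_pos (by linarith), Set.indicator_of_mem (by exact h)]
    · rw [if_neg (by push_neg at h ⊢; linarith), Set.indicator_of_notMem (by exact h)]
  simp_rw [hind]
  rw [lintegral_indicator measurableSet_Iio, Measure.restrict_restrict measurableSet_Iio]
  have hset : Iio (a - s) ∩ Ioc 0 b = Ioo 0 (a - s) := by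
    ext t
    simp only [mem_inter_iff, mem_Iio, mem_Ioc, mem_Ioo]
    constructor
    · rintro ⟨h1, h2, h3⟩; exact ⟨h2, h1⟩
    · rintro ⟨h1, h2⟩; exact ⟨h2, h1, by linarith [hs.1, hs.2]⟩
  rw [hset]
  have hcont : ContinuousOn (fun t => Real.log (a / (s + t))) (Icc 0 (a - s)) := by
    apply ContinuousOn.log
    · apply ContinuousOn.div continuousOn_const (continuousOn_const.add continuousOn_id)
      intro t ht
      simp only [mem_Icc] at ht
      exact ne_of_gt (by linarith [hs.1] : (0:ℝ) < s + t)
    · intro t ht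
      simp only [mem_Icc] at ht
      exact ne_of_gt (div_pos ha (by linarith [hs.1]))
  have hint : IntegrableOn (fun t => Real.log (a / (s + t))) (Ioo 0 (a - s)) volume :=
    (hcont.integrableOn_compact isCompact_Icc).mono_set Ioo_subset_Icc_self
  rw [← ofReal_integral_eq_lintegral_ofReal hint ?_]
  · congr 1
    rw [← MeasureTheory.integral_Ioc_eq_integral_Ioo, ← intervalIntegral.integral_of_le (by linarith [hs.2])]
    have hcomp := intervalIntegral.integral_comp_add_left (a := 0) (b := a - s)
      (fun u => Real.log (a / u)) s
    simp only [add_zero, add_sub_cancel] at hcomp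
    rw [hcomp, lem_core hs.1 hs.2]
  · filter_upwards [ae_restrict_mem measurableSet_Ioo] with t ht
    refine Real.log_nonneg ?_
    rw [le_div_iff₀ (by linarith [ht.1, hs.1])]
    simp only [one_mul]
    linarith [ht.2]



lemma inner2 {a b : ℝ} (ha : 0 < a) (hab : a ≤ b) {s : ℝ} (hs : s ∈ Ioo 0 a) :
    ∫⁻ t in Ioc 0 b, H2fun a b s t
      = ENNReal.ofReal ((a-s) * Real.log (a-s) - (a-s) * Real.log a + s) := by
  have hind : ∀ t : ℝ, H2fun a b s t
      = (Ioi (b - s)).indicator (fun t => ENNReal.ofReal (Real.log (a / ((a-s)+(b-t))))) t := by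
    intro t
    unfold H2fun
    by_cases h : b - s < t
    · rw [if_pos (by linarith), Set.indicator_of_mem (by exact h)]
    · rw [if_neg (by push_neg at h ⊢; linarith), Set.indicator_of_notMem (by exact h)]
  simp_rw [hind]
  rw [lintegral_indicator measurableSet_Ioi, Measure.restrict_restrict measurableSet_Ioi]
  have hset : Ioi (b - s) ∩ Ioc 0 b = Ioc (b - s) b := by
    ext t
    simp only [mem_inter_iff, mem_Ioi, mem_Ioc]
    constructor
    · rintro ⟨h1, _, h3⟩; exact ⟨h1, h3⟩
    · rintro ⟨h1, h2⟩; exact ⟨h1, by linarith [hs.2], h2⟩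
  rw [hset]
  have hsa : 0 < a - s := by linarith [hs.2]
  have hcont : ContinuousOn (fun t => Real.log (a / ((a-s) + (b-t)))) (Icc (b-s) b) := by
    apply ContinuousOn.log
    · apply ContinuousOn.div continuousOn_const
        (continuousOn_const.add (continuousOn_const.sub continuousOn_id))
      intro t ht
      simp only [mem_Icc] at ht
      exact ne_of_gt (by linarith : (0:ℝ) < (a-s) + (b-t))
    · intro t ht
      simp only [mem_Icc] at ht
      exact ne_of_gt (div_pos ha (by linarith))
  have hint : IntegrableOn (fun t => Real.log (a / ((a-s) + (b-t)))) (Ioc (b-s) b) volume :=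
    (hcont.integrableOn_compact isCompact_Icc).mono_set Ioc_subset_Icc_self
  rw [← ofReal_integral_eq_lintegral_ofReal hint ?_]
  · congr 1
    rw [← intervalIntegral.integral_of_le (by linarith [hs.1])]
    have hcomp := intervalIntegral.integral_comp_sub_left (a := b - s) (b := b)
      (fun u => Real.log (a / u)) (a + b - s)
    have e1 : a + b - s - b = a - s := by ring
    have e2 : a + b - s - (b - s) = a := by ring
    rw [e1, e2] at hcomp
    have e3 : ∀ t : ℝ, (a-s) + (b-t) = (a + b - s) - t := by intro t; ring
    simp_rw [e3]
    rw [hcomp, lem_core hsa (by linarith [hs.1])]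
    ring_nf
  · filter_upwards [ae_restrict_mem measurableSet_Ioc] with t ht
    refine Real.log_nonneg ?_
    rw [le_div_iff₀ (by linarith [ht.2] : (0:ℝ) < (a-s)+(b-t))]
    simp only [one_mul]
    linarith [ht.1]



lemma phi_nonneg {a c : ℝ} (ha : 0 < a) (hc : 0 < c) (hca : c ≤ a) :
    0 ≤ c * Real.log c - c * Real.log a + (a - c) := by
  have hls : Real.log (a/c) ≤ a/c - 1 := Real.log_le_sub_one_of_pos (div_pos ha hc)
  have hld : Real.log (a/c) = Real.log a - Real.log c := Real.log_div (ne_of_gt ha) (ne_of_gt hc)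
  have h2 : c * (Real.log a - Real.log c) ≤ c * (a/c - 1) := by
    rw [← hld]; exact mul_le_mul_of_nonneg_left hls hc.le
  have h3 : c * (a/c - 1) = a - c := by field_simp
  nlinarith [h2, h3]

lemma measurable_H1 {a : ℝ} (s : ℝ) : Measurable (fun t => H1fun a s t) := by
  unfold H1fun
  apply Measurable.ite (measurableSet_lt (measurable_const.add measurable_id) measurable_const)
  · exact ENNReal.measurable_ofReal.comp
      (Real.measurable_log.comp (measurable_const.div (measurable_const.add measurable_id)))
  · exact measurable_const

lemma measurable_H2 {a b : ℝ} (s : ℝ) : Measurable (fun t => H2fun a b s t) := by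
  unfold H2fun
  apply Measurable.ite
    (measurableSet_lt (measurable_const.add (measurable_const.sub measurable_id)) measurable_const)
  · exact ENNReal.measurable_ofReal.comp
      (Real.measurable_log.comp (measurable_const.div
        (measurable_const.add (measurable_const.sub measurable_id))))
  · exact measurable_const

lemma measurable_Hfun {a b : ℝ} :
    Measurable (fun q : ℝ × ℝ => Hfun a b q.1 q.2) := by
  unfold Hfun
  apply ENNReal.measurable_ofReal.comp
  apply Real.measurable_log.comp
  apply Measurable.const_div
  exact ((measurable_fst.add measurable_snd).min
    ((measurable_const.sub measurable_fst).add (measurable_const.sub measurable_snd))).min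
    measurable_const

lemma outer_val1 {a : ℝ} (ha : 0 < a) :
    ∫⁻ s in Ioo 0 a, ENNReal.ofReal (s * Real.log s - s * Real.log a + (a - s))
      = ENNReal.ofReal (a^2/4) := by
  have hcont : Continuous (fun s : ℝ => s * Real.log s - s * Real.log a + (a - s)) :=
    ((Real.continuous_mul_log).sub (continuous_id.mul continuous_const)).add
      (continuous_const.sub continuous_id)
  have hint : IntegrableOn (fun s : ℝ => s * Real.log s - s * Real.log a + (a - s)) (Ioo 0 a) volume :=
    (hcont.continuousOn.integrableOn_compact isCompact_Icc).mono_set Ioo_subset_Icc_self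
  rw [← ofReal_integral_eq_lintegral_ofReal hint ?_]
  · congr 1
    rw [← MeasureTheory.integral_Ioc_eq_integral_Ioo, ← intervalIntegral.integral_of_le ha.le]
    exact outer1 ha
  · filter_upwards [ae_restrict_mem measurableSet_Ioo] with s hsm
    exact phi_nonneg ha hsm.1 hsm.2.le

lemma outer_val2 {a : ℝ} (ha : 0 < a) :
    ∫⁻ s in Ioo 0 a, ENNReal.ofReal ((a-s) * Real.log (a-s) - (a-s) * Real.log a + s)
      = ENNReal.ofReal (a^2/4) := by
  have hcont : Continuous (fun s : ℝ => (a-s) * Real.log (a-s) - (a-s) * Real.log a + s) := by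
    have h1 : Continuous (fun s : ℝ => (a-s) * Real.log (a-s)) :=
      Real.continuous_mul_log.comp (continuous_const.sub continuous_id)
    exact (h1.sub ((continuous_const.sub continuous_id).mul continuous_const)).add continuous_id
  have hint : IntegrableOn (fun s : ℝ => (a-s) * Real.log (a-s) - (a-s) * Real.log a + s) (Ioo 0 a) volume :=
    (hcont.continuousOn.integrableOn_compact isCompact_Icc).mono_set Ioo_subset_Icc_self
  rw [← ofReal_integral_eq_lintegral_ofReal hint ?_]
  · congr 1
    rw [← MeasureTheory.integral_Ioc_eq_integral_Ioo, ← intervalIntegral.integral_of_le ha.le]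
    exact outer2 ha
  · filter_upwards [ae_restrict_mem measurableSet_Ioo] with s hsm
    have h4 := phi_nonneg ha (by linarith [hsm.2] : (0:ℝ) < a - s) (by linarith [hsm.1])
    have h5 : a - (a - s) = s := by ring
    rw [h5] at h4
    exact h4

lemma rect {a b : ℝ} (ha : 0 < a) (hab : a ≤ b) :
    ENNReal.ofReal (a^2/2)
      ≤ ∫⁻ q : ℝ × ℝ, Hfun a b q.1 q.2
          ∂((volume.restrict (Ioc 0 a)).prod (volume.restrict (Ioc 0 b))) := by
  rw [lintegral_prod _ measurable_Hfun.aemeasurable]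
  have step2 : ∫⁻ s in Ioo 0 a,
      ((∫⁻ t in Ioc 0 b, H1fun a s t) + (∫⁻ t in Ioc 0 b, H2fun a b s t))
      ≤ ∫⁻ s in Ioc 0 a, ∫⁻ t in Ioc 0 b, Hfun a b s t := by
    rw [Measure.restrict_congr_set (Ioo_ae_eq_Ioc (a := (0:ℝ)) (b := a))]
    apply lintegral_mono_ae
    filter_upwards [ae_restrict_mem measurableSet_Ioc] with s hsm
    rw [← lintegral_add_left (measurable_H1 s)]
    apply lintegral_mono_ae
    filter_upwards [ae_restrict_mem measurableSet_Ioc] with t htm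
    exact Hsplit hab hsm htm
  refine le_trans ?_ step2
  have hcongr : ∫⁻ s in Ioo 0 a,
      ((∫⁻ t in Ioc 0 b, H1fun a s t) + (∫⁻ t in Ioc 0 b, H2fun a b s t))
      = ∫⁻ s in Ioo 0 a,
      (ENNReal.ofReal (s * Real.log s - s * Real.log a + (a - s))
        + ENNReal.ofReal ((a-s) * Real.log (a-s) - (a-s) * Real.log a + s)) := by
    apply lintegral_congr_ae
    filter_upwards [ae_restrict_mem measurableSet_Ioo] with s hsm
    rw [inner1 ha hab (Ioo_subset_Ioc_self hsm), inner2 ha hab hsm]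
  rw [hcongr]
  rw [lintegral_add_left (by
    exact ENNReal.measurable_ofReal.comp ((Real.continuous_mul_log.sub
      (continuous_id.mul continuous_const)).add (continuous_const.sub continuous_id)).measurable)]
  rw [outer_val1 ha, outer_val2 ha]
  rw [← ENNReal.ofReal_add (by positivity) (by positivity)]
  apply ENNReal.ofReal_le_ofReal
  ring_nf
  exact le_refl _

lemma lintegral_Kc {M₁ M₂ : Set ℝ} (h₁ : MeasurableSet M₁) (h₂ : MeasurableSet M₂) :
    ∫⁻ x, Kc M₁ M₂ x = volume M₁ * volume M₂ := by
  have h := lemA h₁ h₂ (fun _ => 1) measurable_const (fun _ => one_ne_top)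
  simp only [mul_one] at h
  rw [h, lintegral_one, ← univ_prod_univ, Measure.prod_prod,
    Measure.restrict_apply_univ, Measure.restrict_apply_univ]

lemma Kc_ne_top (h₁ : MeasurableSet M₁) (h₂ : MeasurableSet M₂) (haf : volume M₁ ≠ ⊤) (x : ℝ) :
    Kc M₁ M₂ x ≠ ⊤ :=
  (lt_of_le_of_lt (Kc_le_left h₁ h₂ x) (lt_top_iff_ne_top.2 haf)).ne

lemma pi_ae_ne_zero (h₁ : MeasurableSet M₁) (h₂ : MeasurableSet M₂) :
    ∀ᵐ p : ℝ × ℝ ∂((volume.restrict M₁).prod (volume.restrict M₂)),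
      Kc M₁ M₂ (p.1 + p.2) ≠ 0 := by
  set π := (volume.restrict M₁).prod (volume.restrict M₂)
  set N := {x : ℝ | Kc M₁ M₂ x = 0} with hN
  have hNmeas : MeasurableSet N := (measurable_Kc h₁ h₂) (measurableSet_singleton 0)
  have hEmeas : MeasurableSet ((fun p : ℝ × ℝ => p.1 + p.2) ⁻¹' N) :=
    hNmeas.preimage measurable_add
  have hkey : ∫⁻ p : ℝ × ℝ, N.indicator 1 (p.1 + p.2) ∂π = 0 := by
    rw [← lemA h₁ h₂ _ (measurable_one.indicator hNmeas) ind_ne_top]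
    have hzero : (fun x => Kc M₁ M₂ x * N.indicator 1 x) = fun _ => (0:ℝ≥0∞) := by
      funext x
      by_cases hx : Kc M₁ M₂ x = 0
      · rw [hx, zero_mul]
      · rw [Set.indicator_of_notMem (by exact hx), mul_zero]
    rw [hzero, lintegral_zero]
  have hE : π ((fun p : ℝ × ℝ => p.1 + p.2) ⁻¹' N) = 0 := by
    rw [← lintegral_indicator_one hEmeas, ← hkey]
    refine lintegral_congr fun p => ?_
    by_cases hp : p.1 + p.2 ∈ N
    · rw [Set.indicator_of_mem hp, Set.indicator_of_mem (show p ∈ _ from hp), Pi.one_apply,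
        Pi.one_apply]
    · rw [Set.indicator_of_notMem hp, Set.indicator_of_notMem (show p ∉ _ from hp)]
  rw [ae_iff]
  convert hE using 2
  ext p
  simp [N]

lemma master (h₁ : MeasurableSet M₁) (h₂ : MeasurableSet M₂)
    (ha0 : volume M₁ ≠ 0) (haf : volume M₁ ≠ ⊤) (hbf : volume M₂ ≠ ⊤)
    (hab : (volume M₁).toReal ≤ (volume M₂).toReal) :
    ENNReal.ofReal ((volume M₁).toReal ^ 2 / 2)
      ≤ ∫⁻ x, Kc M₁ M₂ x
          * ENNReal.ofReal (Real.log ((volume M₁).toReal / (Kc M₁ M₂ x).toReal)) := by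
  set a := (volume M₁).toReal with hadef
  set b := (volume M₂).toReal with hbdef
  have ha : 0 < a := ENNReal.toReal_pos ha0 haf
  set π := (volume.restrict M₁).prod (volume.restrict M₂) with hπ
  set Lf := fun x => ENNReal.ofReal (Real.log (a / (Kc M₁ M₂ x).toReal)) with hLf
  have hLmeas : Measurable Lf :=
    ENNReal.measurable_ofReal.comp (Real.measurable_log.comp
      (Measurable.const_div (ENNReal.measurable_toReal.comp (measurable_Kc h₁ h₂)) a))
  have hLtop : ∀ x, Lf x ≠ ⊤ := fun x => ENNReal.ofReal_ne_top
  rw [lemA h₁ h₂ Lf hLmeas hLtop]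
  calc ENNReal.ofReal (a^2/2)
      ≤ ∫⁻ q : ℝ × ℝ, Hfun a b q.1 q.2
          ∂((volume.restrict (Ioc 0 a)).prod (volume.restrict (Ioc 0 b))) := rect ha hab
    _ = ∫⁻ p : ℝ × ℝ, Hfun a b (gcdf M₁ p.1) (gcdf M₂ p.2) ∂π := by
        rw [← map_gcdf h₁ haf, ← map_gcdf h₂ hbf,
          Measure.map_prod_map _ _ (gcdf_measurable h₁ haf) (gcdf_measurable h₂ hbf),
          lintegral_map measurable_Hfun
            ((gcdf_measurable h₁ haf).prodMap (gcdf_measurable h₂ hbf))]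
        rfl
    _ ≤ ∫⁻ p : ℝ × ℝ, Lf (p.1 + p.2) ∂π := by
        apply lintegral_mono_ae
        filter_upwards [pi_ae_ne_zero h₁ h₂] with p hp
        set y := p.1
        set z := p.2
        set k := (Kc M₁ M₂ (y + z)).toReal with hk
        have hkfin : Kc M₁ M₂ (y + z) ≠ ⊤ := Kc_ne_top h₁ h₂ haf _
        have hk0 : 0 < k := ENNReal.toReal_pos hp hkfin
        have h1 : k ≤ gcdf M₁ y + gcdf M₂ z := by
          have := ENNReal.toReal_mono
            (ENNReal.add_ne_top.2 ⟨(volume_inter_Iic_lt_top haf y).ne,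
              (volume_inter_Iic_lt_top hbf z).ne⟩)
            (Kc_lower_bound_left h₁ h₂ y z)
          rwa [ENNReal.toReal_add (volume_inter_Iic_lt_top haf y).ne
            (volume_inter_Iic_lt_top hbf z).ne] at this
        have h2 : k ≤ (a - gcdf M₁ y) + (b - gcdf M₂ z) := by
          have hfin1 : volume (M₁ ∩ Ici y) ≠ ⊤ :=
            (lt_of_le_of_lt (measure_mono inter_subset_left) (lt_top_iff_ne_top.2 haf)).ne
          have hfin2 : volume (M₂ ∩ Ici z) ≠ ⊤ :=
            (lt_of_le_of_lt (measure_mono inter_subset_left) (lt_top_iff_ne_top.2 hbf)).ne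
          have := ENNReal.toReal_mono (ENNReal.add_ne_top.2 ⟨hfin1, hfin2⟩)
            (Kc_upper_bound_left h₁ h₂ y z)
          rwa [ENNReal.toReal_add hfin1 hfin2, volume_inter_Ici h₁ haf,
            volume_inter_Ici h₂ hbf] at this
        have h3 : k ≤ a := ENNReal.toReal_mono haf (Kc_le_left h₁ h₂ _)
        have hm : k ≤ min (min (gcdf M₁ y + gcdf M₂ z) ((a - gcdf M₁ y) + (b - gcdf M₂ z))) a :=
          le_min (le_min h1 h2) h3
        unfold Lf
        unfold Hfun
        apply ENNReal.ofReal_le_ofReal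
        apply Real.log_le_log (div_pos ha (lt_of_lt_of_le hk0 hm))
        exact div_le_div_of_nonneg_left ha.le hk0 hm
    _ = ∫⁻ p : ℝ × ℝ, Lf (p.1 + p.2) ∂π := rfl


end EntropyAux

open EntropyAux

/-- For independent `X`, `Y` uniform on Borel sets `M₁`, `M₂ ⊆ ℝ` with
`0 < |M₁| < |M₂| < ∞`:
`h(X + Y) ≥ log |M₂| + |M₁|/(2|M₂|) ≥ log(|M₂| + |M₁|/2)`. -/
theorem entropy_sum_uniforms (M₁ M₂ : Set ℝ)
    (h₁ : MeasurableSet M₁) (h₂ : MeasurableSet M₂)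
    (h0 : 0 < volume M₁) (h12 : volume M₁ < volume M₂) (hfin : volume M₂ < ⊤) :
    (((Real.log (volume M₂).toReal +
        (volume M₁).toReal / (2 * (volume M₂).toReal)) : ℝ) : EReal) ≤
      entropyR (conv2R (unifDens M₁) (unifDens M₂)) ∧
    Real.log ((volume M₂).toReal + (volume M₁).toReal / 2) ≤
      Real.log (volume M₂).toReal + (volume M₁).toReal / (2 * (volume M₂).toReal) := by
  -- basic facts
  have hvbf : volume M₂ ≠ ⊤ := hfin.ne
  have hvaf : volume M₁ ≠ ⊤ := (h12.trans hfin).ne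
  have hva0 : volume M₁ ≠ 0 := h0.ne'
  have hvb0 : volume M₂ ≠ 0 := (h0.trans h12).ne'
  set va := volume M₁ with hva
  set vb := volume M₂ with hvb
  set a := va.toReal with hadef
  set b := vb.toReal with hbdef
  have ha : 0 < a := ENNReal.toReal_pos hva0 hvaf
  have hb : 0 < b := ENNReal.toReal_pos hvb0 hvbf
  have hab : a ≤ b := ENNReal.toReal_mono hvbf h12.le
  constructor
  swap
  · exact lem_log2 ha hb
  -- the density
  set f := conv2R (unifDens M₁) (unifDens M₂) with hfdef
  set c : ℝ≥0∞ := va⁻¹ * vb⁻¹ with hcdef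
  have hcne : c ≠ ⊤ :=
    ENNReal.mul_ne_top (ENNReal.inv_ne_top.2 hva0) (ENNReal.inv_ne_top.2 hvb0)
  have hf_eq : ∀ x, f x = c * Kc M₁ M₂ x := by
    intro x
    unfold f c
    unfold conv2R unifDens Kc
    rw [← lintegral_const_mul' _ _ (ENNReal.mul_ne_top (ENNReal.inv_ne_top.2 hva0)
      (ENNReal.inv_ne_top.2 hvb0))]
    refine lintegral_congr fun y => ?_
    rw [mul_mul_mul_comm]
  have hf_meas : Measurable f := by
    have : f = fun x => c * Kc M₁ M₂ x := funext hf_eq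
    rw [this]
    exact (measurable_Kc h₁ h₂).const_mul c
  have hf_le : ∀ x, f x ≤ vb⁻¹ := by
    intro x
    rw [hf_eq x]
    calc c * Kc M₁ M₂ x ≤ c * va := mul_le_mul_right (Kc_le_left h₁ h₂ x) c
      _ = vb⁻¹ := by
          rw [hcdef, mul_comm va⁻¹ vb⁻¹, mul_assoc, ENNReal.inv_mul_cancel hva0 hvaf, mul_one]
  have hf_ne_top : ∀ x, f x ≠ ⊤ :=
    fun x => (lt_of_le_of_lt (hf_le x) (lt_top_iff_ne_top.2 (ENNReal.inv_ne_top.2 hvb0))).ne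
  have hf_mass : ∫⁻ x, f x = 1 := by
    rw [lintegral_congr hf_eq, lintegral_const_mul' _ _ hcne, lintegral_Kc h₁ h₂]
    rw [hcdef, mul_mul_mul_comm, ENNReal.inv_mul_cancel hva0 hvaf,
      ENNReal.inv_mul_cancel hvb0 hvbf, mul_one]
  -- real density
  set F : ℝ → ℝ := fun x => (f x).toReal with hFdef
  have hF_nonneg : ∀ x, 0 ≤ F x := fun x => ENNReal.toReal_nonneg
  have hF_meas : Measurable F := hf_meas.ennreal_toReal
  have hF_le : ∀ x, F x ≤ 1 / b := by
    intro x
    have := ENNReal.toReal_mono (ENNReal.inv_ne_top.2 hvb0) (hf_le x)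
    rwa [ENNReal.toReal_inv, ← one_div] at this
  set φ : ℝ → ℝ := fun x => F x * Real.log (F x) with hφdef
  have hφ_meas : Measurable φ := hF_meas.mul (Real.measurable_log.comp hF_meas)
  set A := ∫⁻ x, ENNReal.ofReal (-(φ x)) with hAdef
  set B := ∫⁻ x, ENNReal.ofReal (φ x) with hBdef
  have hentropy : entropyR f = (A : EReal) - (B : EReal) := rfl
  -- B is finite
  have hBle : B ≤ ENNReal.ofReal ((1/b) * Real.log (1/b)) * volume {x | 1 < f x} := by
    have hmono : ∀ x, ENNReal.ofReal (φ x)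
        ≤ {x | 1 < f x}.indicator (fun _ => ENNReal.ofReal ((1/b) * Real.log (1/b))) x := by
      intro x
      by_cases hx : 1 < f x
      · rw [Set.indicator_apply, if_pos (show x ∈ {x | 1 < f x} from hx)]
        apply ENNReal.ofReal_le_ofReal
        have hfx1 : 1 < F x := by
          have := (ENNReal.toReal_lt_toReal one_ne_top (hf_ne_top x)).2 hx
          simpa using this
        have hlog0 : 0 ≤ Real.log (F x) := Real.log_nonneg hfx1.le
        have hlog : Real.log (F x) ≤ Real.log (1/b) :=
          Real.log_le_log (lt_trans zero_lt_one hfx1) (hF_le x)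
        exact mul_le_mul (hF_le x) hlog hlog0 (by positivity)
      · rw [Set.indicator_apply, if_neg (show x ∉ {x | 1 < f x} from hx)]
        rw [ENNReal.ofReal_eq_zero.2]
        have hFle1 : F x ≤ 1 := by
          have h9 : f x ≤ 1 := not_lt.1 hx
          have := ENNReal.toReal_mono one_ne_top h9
          simpa using this
        exact Real.mul_log_nonpos (hF_nonneg x) hFle1
    calc B ≤ ∫⁻ x, {x | 1 < f x}.indicator (fun _ => ENNReal.ofReal ((1/b) * Real.log (1/b))) x :=
          lintegral_mono hmono
      _ = ENNReal.ofReal ((1/b) * Real.log (1/b)) * volume {x | 1 < f x} := by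
          rw [lintegral_indicator (measurableSet_lt measurable_const hf_meas),
            setLIntegral_const]
  have hmarkov : volume {x | 1 < f x} ≤ 1 := by
    have h' := mul_meas_ge_le_lintegral₀ (μ := volume) hf_meas.aemeasurable 1
    rw [hf_mass, one_mul] at h'
    have hsub : {x : ℝ | 1 < f x} ⊆ {x : ℝ | 1 ≤ f x} := fun x hx => le_of_lt (show (1:ℝ≥0∞) < f x from hx)
    exact le_trans (measure_mono hsub) h'
  have hBne : B ≠ ⊤ := by
    refine (lt_of_le_of_lt (hBle.trans (mul_le_mul_right hmarkov _)) ?_).ne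
    rw [mul_one]
    exact ENNReal.ofReal_lt_top
  have hBcoe : (B : EReal) = ((B.toReal : ℝ) : EReal) := by
    nth_rewrite 1 [← ENNReal.ofReal_toReal hBne]
    rw [EReal.coe_ennreal_ofReal, max_eq_left ENNReal.toReal_nonneg]
  by_cases hAtop : A = ⊤
  · rw [hentropy, hAtop, EReal.coe_ennreal_top, hBcoe, EReal.top_sub_coe]
    exact le_top
  · have hAcoe : (A : EReal) = ((A.toReal : ℝ) : EReal) := by
      nth_rewrite 1 [← ENNReal.ofReal_toReal hAtop]
      rw [EReal.coe_ennreal_ofReal, max_eq_left ENNReal.toReal_nonneg]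
    rw [hentropy, hAcoe, hBcoe, ← EReal.coe_sub, EReal.coe_le_coe_iff]
    -- integrability of φ
    have hφint : Integrable φ volume := by
      refine ⟨hφ_meas.aestronglyMeasurable, ?_⟩
      rw [hasFiniteIntegral_iff_norm]
      have hptw : ∀ x, ENNReal.ofReal ‖φ x‖ ≤ ENNReal.ofReal (φ x) + ENNReal.ofReal (-(φ x)) := by
        intro x
        rw [Real.norm_eq_abs]
        rcases le_total 0 (φ x) with h | h
        · rw [abs_of_nonneg h]; exact le_self_add
        · rw [abs_of_nonpos h]; exact le_add_self
      calc ∫⁻ x, ENNReal.ofReal ‖φ x‖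
          ≤ ∫⁻ x, (ENNReal.ofReal (φ x) + ENNReal.ofReal (-(φ x))) := lintegral_mono hptw
        _ = B + A := lintegral_add_left hφ_meas.ennreal_ofReal _
        _ < ⊤ := ENNReal.add_lt_top.2 ⟨lt_top_iff_ne_top.2 hBne, lt_top_iff_ne_top.2 hAtop⟩
    have hrepr := integral_eq_lintegral_pos_part_sub_lintegral_neg_part hφint.neg
    simp only [Pi.neg_apply, neg_neg] at hrepr
    -- F integrable with integral 1
    have hFint : Integrable F volume := by
      refine ⟨hF_meas.aestronglyMeasurable, ?_⟩
      rw [hasFiniteIntegral_iff_norm]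
      have : ∀ x, ENNReal.ofReal ‖F x‖ = f x := by
        intro x
        rw [Real.norm_eq_abs, abs_of_nonneg (hF_nonneg x), ENNReal.ofReal_toReal (hf_ne_top x)]
      rw [lintegral_congr this, hf_mass]
      exact one_lt_top
    have hFval : ∫ x, F x = 1 := by
      have := integral_toReal (μ := volume) hf_meas.aemeasurable
        (ae_of_all _ fun x => lt_top_iff_ne_top.2 (hf_ne_top x))
      rw [hf_mass] at this
      simpa using this
    set ψ : ℝ → ℝ := fun x => F x * Real.log (1/(b * F x)) with hψdef
    have hid : ∀ x, ψ x = -(φ x) - F x * Real.log b := by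
      intro x
      rcases eq_or_lt_of_le (hF_nonneg x) with h | h
    -- F x = 0
      · show F x * Real.log (1/(b * F x)) = -(F x * Real.log (F x)) - F x * Real.log b
        rw [← h]
        ring
      · show F x * Real.log (1/(b * F x)) = -(F x * Real.log (F x)) - F x * Real.log b
        rw [one_div, Real.log_inv, Real.log_mul hb.ne' h.ne']
        ring
    have hψint : Integrable ψ volume := by
      have heq : ψ = fun x => -(φ x) - F x * Real.log b := funext hid
      rw [heq]
      exact hφint.neg.sub (hFint.mul_const _)
    have hsum : ∫ x, -(φ x) = (∫ x, ψ x) + Real.log b := by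
      have h1 : (fun x => -(φ x)) = fun x => ψ x + F x * Real.log b := by
        funext x
        rw [hid x]
        ring
      rw [h1, integral_add hψint (hFint.mul_const _), integral_mul_const, hFval, one_mul]
    have hψ_nonneg : ∀ x, 0 ≤ ψ x := by
      intro x
      rcases eq_or_lt_of_le (hF_nonneg x) with h | h
      · show 0 ≤ F x * Real.log (1/(b * F x))
        rw [← h, zero_mul]
      · apply mul_nonneg h.le
        apply Real.log_nonneg
        have hbF : b * F x ≤ 1 := by
          have := mul_le_mul_of_nonneg_left (hF_le x) hb.le
          rwa [mul_one_div, div_self hb.ne'] at this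
        rw [le_div_iff₀ (by positivity), one_mul]
        exact hbF
    have hψofReal : ENNReal.ofReal (∫ x, ψ x) = ∫⁻ x, ENNReal.ofReal (ψ x) :=
      ofReal_integral_eq_lintegral_ofReal hψint (ae_of_all _ hψ_nonneg)
    -- pointwise identification with the master integrand
    have hpt : ∀ x, ENNReal.ofReal (ψ x)
        = c * (Kc M₁ M₂ x * ENNReal.ofReal (Real.log (a / (Kc M₁ M₂ x).toReal))) := by
      intro x
      by_cases hx : Kc M₁ M₂ x = 0
      · have hFx : F x = 0 := by
          show (f x).toReal = 0
          rw [hf_eq x, hx, mul_zero]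
          rfl
        show ENNReal.ofReal (F x * Real.log (1/(b * F x))) = _
        rw [hFx, zero_mul, ENNReal.ofReal_zero, hx, zero_mul, mul_zero]
      · have hkne : Kc M₁ M₂ x ≠ ⊤ := Kc_ne_top h₁ h₂ hvaf x
        have hk0 : 0 < (Kc M₁ M₂ x).toReal := ENNReal.toReal_pos hx hkne
        have hFx : F x = (Kc M₁ M₂ x).toReal * (a⁻¹ * b⁻¹) := by
          show (f x).toReal = _
          rw [hf_eq x, ENNReal.toReal_mul, hcdef, ENNReal.toReal_mul,
            ENNReal.toReal_inv, ENNReal.toReal_inv, mul_comm]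
        have harg : 1/(b * F x) = a / (Kc M₁ M₂ x).toReal := by
          rw [hFx]
          field_simp
        show ENNReal.ofReal (F x * Real.log (1/(b * F x))) = _
        rw [harg, ENNReal.ofReal_mul (hF_nonneg x)]
        have hfof : ENNReal.ofReal (F x) = c * Kc M₁ M₂ x := by
          show ENNReal.ofReal (f x).toReal = _
          rw [ENNReal.ofReal_toReal (hf_ne_top x), hf_eq x]
        rw [hfof, mul_assoc, mul_comm (Kc M₁ M₂ x) _, ← mul_assoc, mul_assoc c _ _,
          mul_comm _ (Kc M₁ M₂ x)]
    have hcofReal : c = ENNReal.ofReal ((a*b)⁻¹) := by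
      rw [mul_inv, ENNReal.ofReal_mul (by positivity), ENNReal.ofReal_inv_of_pos ha,
        ENNReal.ofReal_inv_of_pos hb, ENNReal.ofReal_toReal hvaf, ENNReal.ofReal_toReal hvbf]
    have hlow : ENNReal.ofReal (a/(2*b)) ≤ ENNReal.ofReal (∫ x, ψ x) := by
      rw [hψofReal, lintegral_congr hpt, lintegral_const_mul' _ _ hcne]
      calc ENNReal.ofReal (a/(2*b)) = c * ENNReal.ofReal (a^2/2) := by
            rw [hcofReal, ← ENNReal.ofReal_mul (by positivity)]
            congr 1
            field_simp
        _ ≤ c * ∫⁻ x, Kc M₁ M₂ x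
              * ENNReal.ofReal (Real.log (a / (Kc M₁ M₂ x).toReal)) :=
            mul_le_mul_right (master h₁ h₂ hva0 hvaf hvbf hab) c
    have hψge : a/(2*b) ≤ ∫ x, ψ x :=
      (ENNReal.ofReal_le_ofReal_iff (integral_nonneg hψ_nonneg)).1 hlow
    have hfinal : Real.log b + a/(2*b) ≤ ∫ x, -(φ x) := by
      rw [hsum]
      linarith
    rw [hAdef, hBdef, ← hrepr]
    exact hfinal



end
end
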